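/- arXiv:2211.12812 — 9 statements merged into one kernel-verified Lean document; each statement's English description precedes it below -/
import Mathlib

section
/- Let G be a group with center Z, let Λ be a group, and let θ : Λ → Aut(G) be a group homomorphism such that θ(λ)(z) = z for every λ ∈ Λ and every z ∈ Z. Let Hom(Λ,Z) denote the group of homomorphisms Λ → Z under pointwise multiplication. Then the map c_θ : G_θ → Hom(Λ,Z) defined by c_θ(g)(λ) := θ(λ)(g)·g⁻¹ is a group homomorphism whose kernel is exactly G^θ; in particular the sequence 1 → G^θ → G_θ → Hom(Λ,Z) is exact and c_θ induces an injective homomorphism G_θ/G^θ → Hom(Λ,Z). -/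
open scoped IsMulCommutative

/-- Let `G` be a group with centre `Z`, `Λ` a group and `θ : Λ → Aut G` a
homomorphism fixing `Z` pointwise.  Let `K = G_θ` be the subgroup of elements `g` with
`θ l g * g⁻¹ ∈ Z` for all `l`.  Then `c_θ : G_θ → Hom(Λ, Z)`, `c_θ(g)(l) = θ l g * g⁻¹`,
is a group homomorphism whose kernel is exactly `G^θ`; in particular the sequence
`1 → G^θ → G_θ → Hom(Λ,Z)` is exact and `c_θ` induces an injection `G_θ/G^θ ↪ Hom(Λ,Z)`. -/
theorem stmt_4 {G Λ : Type*} [Group G] [Group Λ] (θ : Λ →* MulAut G)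
    (hZ : ∀ (l : Λ) (z : G), z ∈ Subgroup.center G → θ l z = z)
    (K : Subgroup G)
    (hK : (K : Set G) = {g : G | ∀ l : Λ, θ l g * g⁻¹ ∈ Subgroup.center G}) :
    ∃ c : K →* (Λ →* Subgroup.center G),
      (∀ (g : K) (l : Λ), ((c g l : Subgroup.center G) : G) = θ l (g : G) * (g : G)⁻¹) ∧
      (∀ g : K, c g = 1 ↔ ∀ l : Λ, θ l (g : G) = (g : G)) ∧
      (∀ g g' : K, c g = c g' →
        ∀ l : Λ, θ l ((g : G) * (g' : G)⁻¹) = (g : G) * (g' : G)⁻¹) := by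
  have hmem : ∀ (g : K) (l : Λ), θ l (g : G) * (g : G)⁻¹ ∈ Subgroup.center G := by
    intro g l
    have : (g : G) ∈ (K : Set G) := g.2
    rw [hK] at this
    exact this l
  -- key identity: θ l g = z * g with z central
  have hdecomp : ∀ (g : K) (l : Λ), θ l (g : G) = (θ l (g : G) * (g : G)⁻¹) * (g : G) := by
    intro g l; group
  refine ⟨{
      toFun := fun g => {
        toFun := fun l => ⟨θ l (g : G) * (g : G)⁻¹, hmem g l⟩
        map_one' := by
          ext
          simp
        map_mul' := by
          intro l₁ l₂
          ext
          have hz₂ := hmem g l₂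
          have h1 : θ l₁ (θ l₂ (g : G)) = (θ l₂ (g : G) * (g : G)⁻¹) * θ l₁ (g : G) := by
            conv_lhs => rw [hdecomp g l₂]
            rw [map_mul, hZ l₁ _ hz₂]
          have hcomm := (Subgroup.mem_center_iff.mp hz₂) (θ l₁ (g : G) * (g : G)⁻¹)
          simp only [Submonoid.coe_mul, Subgroup.coe_mk]
          calc θ (l₁ * l₂) (g : G) * (g : G)⁻¹
              = θ l₁ (θ l₂ (g : G)) * (g : G)⁻¹ := by rw [map_mul]; rfl
            _ = (θ l₂ (g : G) * (g : G)⁻¹) * (θ l₁ (g : G) * (g : G)⁻¹) := by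
                rw [h1]; group
            _ = (θ l₁ (g : G) * (g : G)⁻¹) * (θ l₂ (g : G) * (g : G)⁻¹) := by
                rw [← hcomm]
      }
      map_one' := by
        ext l
        simp
      map_mul' := by
        intro g g'
        ext l
        have hz' := hmem g' l
        have hcomm := (Subgroup.mem_center_iff.mp hz') (g : G)⁻¹
        simp only [MonoidHom.coe_mk, OneHom.coe_mk, MonoidHom.mul_apply, Submonoid.coe_mul,
          Subgroup.coe_mk, Subgroup.coe_mul]
        calc θ l ((g : G) * (g' : G)) * ((g : G) * (g' : G))⁻¹
            = θ l (g : G) * ((θ l (g' : G) * (g' : G)⁻¹) * (g : G)⁻¹) := by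
              rw [map_mul]; group
          _ = θ l (g : G) * ((g : G)⁻¹ * (θ l (g' : G) * (g' : G)⁻¹)) := by rw [hcomm]
          _ = (θ l (g : G) * (g : G)⁻¹) * (θ l (g' : G) * (g' : G)⁻¹) := by group
    }, ?_, ?_, ?_⟩
  · intro g l; rfl
  · intro g
    constructor
    · intro h l
      have := congrArg (fun f => ((f l : Subgroup.center G) : G)) h
      have h1 : θ l (g : G) * (g : G)⁻¹ = 1 := this
      have := mul_eq_one_iff_eq_inv.mp h1
      simpa using this
    · intro h
      ext l
      simp [h l]
  · intro g g' hgg l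
    have := congrArg (fun f => ((f l : Subgroup.center G) : G)) hgg
    have heq : θ l (g : G) * (g : G)⁻¹ = θ l (g' : G) * (g' : G)⁻¹ := this
    have hz := hmem g l
    have hcomm := (Subgroup.mem_center_iff.mp hz) ((g : G) * (g' : G)⁻¹)
    calc θ l ((g : G) * (g' : G)⁻¹)
        = θ l (g : G) * (θ l (g' : G))⁻¹ := by rw [map_mul, map_inv]
      _ = (θ l (g : G) * (g : G)⁻¹) * ((g : G) * (g' : G)⁻¹) * (θ l (g' : G) * (g' : G)⁻¹)⁻¹ := by
          group
      _ = (θ l (g : G) * (g : G)⁻¹) * ((g : G) * (g' : G)⁻¹) * (θ l (g : G) * (g : G)⁻¹)⁻¹ := by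
          rw [heq]
      _ = (g : G) * (g' : G)⁻¹ := by rw [← hcomm]; group
end

section
/- Let Λ be a commutative group, l an antisymmetric pairing on Λ, and Δ, Δ' two maximal isotropic subgroups of Λ. Then the kernel of the homomorphism Δ' → Hom(Δ,ℂˣ) sending δ' to the restriction of l(δ') to Δ equals Δ ∩ Δ'; moreover, for every δ' ∈ Δ' the character l(δ')|_Δ is trivial on Δ ∩ Δ', so that l induces an injective homomorphism from Δ'/(Δ ∩ Δ') into Hom(Δ/(Δ ∩ Δ'), ℂˣ). -/
/-- An antisymmetric pairing on a commutative group `Λ` is a homomorphism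
`l : Λ → Λ* = Hom(Λ, ℂˣ)` with `l x x = 1` for all `x`. -/
def IsAntisymPairing {Λ : Type*} [CommGroup Λ] (l : Λ →* (Λ →* ℂˣ)) : Prop :=
  ∀ x : Λ, l x x = 1

/-- A subgroup `Δ ≤ Λ` is isotropic for `l` if `l` pairs any two of its elements trivially. -/
def IsIsotropic {Λ : Type*} [CommGroup Λ] (l : Λ →* (Λ →* ℂˣ)) (Δ : Subgroup Λ) : Prop :=
  ∀ x ∈ Δ, ∀ y ∈ Δ, l x y = 1

/-- A subgroup is maximal isotropic if it is isotropic and not properly contained in any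
isotropic subgroup. -/
def IsMaxIsotropic {Λ : Type*} [CommGroup Λ] (l : Λ →* (Λ →* ℂˣ)) (Δ : Subgroup Λ) : Prop :=
  IsIsotropic l Δ ∧ ∀ Δ' : Subgroup Λ, IsIsotropic l Δ' → Δ ≤ Δ' → Δ' = Δ

/-- Antisymmetry: `l y x = (l x y)⁻¹`. -/
lemma antisym_skew {Λ : Type*} [CommGroup Λ] {l : Λ →* (Λ →* ℂˣ)}
    (hl : IsAntisymPairing l) (x y : Λ) : l y x = (l x y)⁻¹ := by
  have h := hl (x * y)
  simp only [map_mul, MonoidHom.mul_apply, hl x, hl y, one_mul, mul_one] at h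
  rw [eq_inv_iff_mul_eq_one, mul_comm]
  first
  | exact h
  | simpa [mul_comm] using h

/-- Closure of a pairwise-trivial set is isotropic. -/
lemma isotropic_closure {Λ : Type*} [CommGroup Λ] (l : Λ →* (Λ →* ℂˣ))
    (U : Set Λ) (hU : ∀ u ∈ U, ∀ v ∈ U, l u v = 1) :
    IsIsotropic l (Subgroup.closure U) := by
  -- first: every u ∈ U kills all of closure U
  have step1 : ∀ u ∈ U, ∀ b ∈ Subgroup.closure U, l u b = 1 := by
    intro u hu b hb
    have : Subgroup.closure U ≤ (l u).ker := by
      rw [Subgroup.closure_le]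
      intro v hv
      exact hU u hu v hv
    exact this hb
  -- the set of a killing all of closure U is a subgroup
  let K : Subgroup Λ :=
    { carrier := {a | ∀ b ∈ Subgroup.closure U, l a b = 1}
      one_mem' := by intro b hb; simp
      mul_mem' := by
        intro a c ha hc b hb
        have := ha b hb
        have := hc b hb
        simp [map_mul, ha b hb, hc b hb]
      inv_mem' := by
        intro a ha b hb
        simp [ha b hb] }
  have hK : Subgroup.closure U ≤ K := by
    rw [Subgroup.closure_le]
    intro u hu
    exact step1 u hu
  intro x hx y hy
  exact hK hx y hy

/-- Key lemma: if `Δ` is maximal isotropic and `x` pairs trivially with all of `Δ`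
(in one order), then `x ∈ Δ`. -/
lemma mem_of_pair_trivial {Λ : Type*} [CommGroup Λ] {l : Λ →* (Λ →* ℂˣ)}
    (hl : IsAntisymPairing l) {Δ : Subgroup Λ} (hΔ : IsMaxIsotropic l Δ)
    {x : Λ} (hx : ∀ d ∈ Δ, l x d = 1) : x ∈ Δ := by
  have hx' : ∀ d ∈ Δ, l d x = 1 := by
    intro d hd
    rw [antisym_skew hl, hx d hd, inv_one]
  set U : Set Λ := (Δ : Set Λ) ∪ {x} with hUdef
  have hU : ∀ u ∈ U, ∀ v ∈ U, l u v = 1 := by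
    rintro u (hu | hu) v (hv | hv)
    · exact hΔ.1 u hu v hv
    · rw [Set.mem_singleton_iff] at hv; rw [hv]; exact hx' u hu
    · rw [Set.mem_singleton_iff] at hu; rw [hu]; exact hx v hv
    · rw [Set.mem_singleton_iff] at hu hv; rw [hu, hv]; exact hl _
  have hiso := isotropic_closure l U hU
  have hle : Δ ≤ Subgroup.closure U := fun a ha => Subgroup.subset_closure (Or.inl ha)
  have heq := hΔ.2 _ hiso hle
  have hxmem : x ∈ Subgroup.closure U := Subgroup.subset_closure (Or.inr rfl)
  rwa [heq] at hxmem

/-- For two maximal isotropic subgroups `Δ, Δ'` of an antisymmetric pairing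
`l` on a commutative group `Λ`:  the kernel of `Δ' → Hom(Δ, ℂˣ)`, `δ' ↦ (l δ')|_Δ`, equals
`Δ ⊓ Δ'`; each character `(l δ')|_Δ` is trivial on `Δ ⊓ Δ'` (and constant on its cosets);
and `l` induces an injection `Δ'/(Δ ⊓ Δ') ↪ Hom(Δ/(Δ ⊓ Δ'), ℂˣ)`. -/
theorem stmt_6 {Λ : Type*} [CommGroup Λ] (l : Λ →* (Λ →* ℂˣ))
    (hl : IsAntisymPairing l) (Δ Δ' : Subgroup Λ)
    (hΔ : IsMaxIsotropic l Δ) (hΔ' : IsMaxIsotropic l Δ') :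
    (∀ x ∈ Δ', ((∀ d ∈ Δ, l x d = 1) ↔ x ∈ Δ ⊓ Δ')) ∧
    (∀ x ∈ Δ', ∀ y ∈ Δ ⊓ Δ', l x y = 1) ∧
    (∀ x ∈ Δ', ∀ d₁ ∈ Δ, ∀ d₂ ∈ Δ, d₁ * d₂⁻¹ ∈ Δ ⊓ Δ' → l x d₁ = l x d₂) ∧
    (∀ x ∈ Δ', ∀ y ∈ Δ', (∀ d ∈ Δ, l x d = l y d) → x * y⁻¹ ∈ Δ ⊓ Δ') := by
  refine ⟨?_, ?_, ?_, ?_⟩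
  · intro x hx
    constructor
    · intro h
      exact ⟨mem_of_pair_trivial hl hΔ h, hx⟩
    · rintro ⟨hxΔ, -⟩ d hd
      exact hΔ.1 x hxΔ d hd
  · intro x hx y hy
    exact hΔ'.1 x hx y hy.2
  · intro x hx d₁ hd₁ d₂ hd₂ hdd
    have h1 : l x (d₁ * d₂⁻¹) = 1 := hΔ'.1 x hx _ hdd.2
    have : l x d₁ = l x (d₁ * d₂⁻¹) * l x d₂ := by
      rw [map_mul, mul_assoc, ← map_mul, inv_mul_cancel, map_one, mul_one]
    rw [this, h1, one_mul]
  · intro x hx y hy h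
    have hkey : ∀ d ∈ Δ, l (x * y⁻¹) d = 1 := by
      intro d hd
      have : l (x * y⁻¹) = l x * (l y)⁻¹ := by rw [map_mul, map_inv]
      rw [this]
      simp [h d hd]
    exact ⟨mem_of_pair_trivial hl hΔ hkey, Δ'.mul_mem hx (Δ'.inv_mem hy)⟩
end

section
/- Let Λ be a finite commutative group, l an antisymmetric pairing on Λ, and Δ, Δ' two maximal isotropic subgroups of Λ. Then Δ and Δ' have the same cardinality. -/
/-- Antisymmetry in the usual sense. -/
lemma antisym_aux {Λ : Type*} [CommGroup Λ] (l : Λ →* (Λ →* ℂˣ))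
    (hl : IsAntisymPairing l) (x y : Λ) : l x y * l y x = 1 := by
  have h := hl (x * y)
  simpa [map_mul, MonoidHom.mul_apply, hl x, hl y, mul_comm, mul_assoc, mul_left_comm] using h

/-- The key one-sided inequality. -/
lemma card_le_aux {Λ : Type*} [CommGroup Λ] [Finite Λ] (l : Λ →* (Λ →* ℂˣ))
    (hl : IsAntisymPairing l) (Δ Δ' : Subgroup Λ)
    (hΔ : IsMaxIsotropic l Δ) (hΔ' : IsMaxIsotropic l Δ') :
    Nat.card Δ ≤ Nat.card Δ' := by
  classical
  -- the pairing map `Δ → Hom(Δ', ℂˣ)`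
  let f : Δ →* (Δ' →* ℂˣ) :=
    { toFun := fun δ => (l δ).comp Δ'.subtype
      map_one' := by simp
      map_mul' := by
        intro a b
        ext x
        simp [map_mul, MonoidHom.mul_apply] }
  -- the kernel of `f` is `Δ ∩ Δ'` (viewed inside `Δ`)
  have hker : f.ker = Δ'.subgroupOf Δ := by
    ext δ
    constructor
    · intro hδ
      have hδ' : ∀ y ∈ Δ', l (δ : Λ) y = 1 := by
        intro y hy
        have := congrArg (fun χ : Δ' →* ℂˣ => χ ⟨y, hy⟩) (MonoidHom.mem_ker.mp hδ)
        simpa [f] using this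
      -- `Δ' ⊔ ⟨δ⟩` is isotropic, hence equals `Δ'` by maximality
      have hiso : IsIsotropic l (Δ' ⊔ Subgroup.zpowers (δ : Λ)) := by
        intro x hx y hy
        obtain ⟨a, ha, z, hz, rfl⟩ := Subgroup.mem_sup.mp hx
        obtain ⟨b, hb, w, hw, rfl⟩ := Subgroup.mem_sup.mp hy
        obtain ⟨m, rfl⟩ := hz
        obtain ⟨n, rfl⟩ := hw
        have hab : l a b = 1 := hΔ'.1 a ha b hb
        have hdb : l (δ : Λ) b = 1 := hδ' b hb
        have hda : l (δ : Λ) a = 1 := hδ' a ha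
        have had : l a (δ : Λ) = 1 := by
          have := antisym_aux l hl a (δ : Λ)
          rw [hda, mul_one] at this
          exact this
        have hpow : ∀ (k : ℤ) (c : Λ), ((l (δ : Λ)) ^ k) c = ((l (δ : Λ)) c) ^ k :=
          fun k c => rfl
        simp [map_mul, map_zpow, MonoidHom.mul_apply, hab, hdb, had, hl (δ : Λ), hpow]
      have heq := hΔ'.2 _ hiso le_sup_left
      have : (δ : Λ) ∈ Δ' := by
        rw [← heq]
        exact (le_sup_right : Subgroup.zpowers (δ : Λ) ≤ _) (Subgroup.mem_zpowers _)
      exact this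
    · intro hδ
      rw [MonoidHom.mem_ker]
      ext x
      simpa [f] using hΔ'.1 (δ : Λ) hδ (x : Λ) x.2
  -- `f` descends to `F : Δ →* Hom(Δ'/(Δ ∩ Δ'), ℂˣ)`
  have htriv : ∀ δ : Δ, ∀ x ∈ Δ.subgroupOf Δ', ((l δ).comp Δ'.subtype) x = 1 := by
    intro δ x hx
    exact hΔ.1 (δ : Λ) δ.2 (x : Λ) hx
  let F : Δ →* ((Δ' ⧸ Δ.subgroupOf Δ') →* ℂˣ) :=
    { toFun := fun δ => QuotientGroup.lift _ ((l δ).comp Δ'.subtype) (show Δ.subgroupOf Δ' ≤ ((l δ).comp Δ'.subtype).ker from fun x hx => htriv δ x hx)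
      map_one' := by
        ext x
        simp
      map_mul' := by
        intro a b
        ext x
        simp [map_mul, MonoidHom.mul_apply] }
  have hkerF : F.ker = f.ker := by
    ext δ
    simp only [MonoidHom.mem_ker]
    constructor
    · intro h
      ext x
      have := congrArg (fun χ : (Δ' ⧸ Δ.subgroupOf Δ') →* ℂˣ =>
        χ (QuotientGroup.mk x)) h
      simpa [F, f] using this
    · intro h
      ext x
      have := congrArg (fun χ : Δ' →* ℂˣ => χ x) h
      simpa [F, f] using this
  -- duality: `Nat.card (G →* ℂˣ) = Nat.card G` for the quotient group
  have hNZ : NeZero ((Monoid.exponent (Δ' ⧸ Δ.subgroupOf Δ') : ℂ)) :=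
    ⟨by exact_mod_cast Monoid.exponent_ne_zero_of_finite⟩
  obtain ⟨e⟩ := CommGroup.monoidHom_mulEquiv_of_hasEnoughRootsOfUnity
    (Δ' ⧸ Δ.subgroupOf Δ') ℂ
  have hfin : Finite ((Δ' ⧸ Δ.subgroupOf Δ') →* ℂˣ) := Finite.of_equiv _ e.toEquiv.symm
  have hdual : Nat.card ((Δ' ⧸ Δ.subgroupOf Δ') →* ℂˣ)
      = Nat.card (Δ' ⧸ Δ.subgroupOf Δ') := Nat.card_congr e.toEquiv
  -- counting
  have h1 : Nat.card Δ = Nat.card (Δ ⧸ F.ker) * Nat.card F.ker :=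
    Subgroup.card_eq_card_quotient_mul_card_subgroup _
  have h2 : Nat.card (Δ ⧸ F.ker) ≤ Nat.card ((Δ' ⧸ Δ.subgroupOf Δ') →* ℂˣ) := by
    have e := QuotientGroup.quotientKerEquivRange F
    rw [Nat.card_congr e.toEquiv]
    exact Nat.card_le_card_of_injective _ Subtype.coe_injective
  have h3 : Nat.card F.ker = Nat.card (Δ.subgroupOf Δ' : Subgroup Δ') := by
    rw [hkerF, hker]
    rw [← Subgroup.inf_subgroupOf_right Δ' Δ, ← Subgroup.inf_subgroupOf_right Δ Δ']
    rw [Nat.card_congr (Subgroup.subgroupOfEquivOfLe inf_le_right).toEquiv,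
      Nat.card_congr (Subgroup.subgroupOfEquivOfLe inf_le_right).toEquiv]
    rw [inf_comm]
  have h4 : Nat.card Δ' = Nat.card (Δ' ⧸ Δ.subgroupOf Δ') * Nat.card (Δ.subgroupOf Δ') :=
    Subgroup.card_eq_card_quotient_mul_card_subgroup _
  calc Nat.card Δ = Nat.card (Δ ⧸ F.ker) * Nat.card F.ker := h1
    _ ≤ Nat.card (Δ' ⧸ Δ.subgroupOf Δ') * Nat.card (Δ.subgroupOf Δ') := by
        rw [h3]
        exact Nat.mul_le_mul_right _ (h2.trans_eq hdual)
    _ = Nat.card Δ' := h4.symm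

/-- Two maximal isotropic subgroups of an antisymmetric pairing on a finite
commutative group have the same cardinality. -/
theorem stmt_7 {Λ : Type*} [CommGroup Λ] [Finite Λ] (l : Λ →* (Λ →* ℂˣ))
    (hl : IsAntisymPairing l) (Δ Δ' : Subgroup Λ)
    (hΔ : IsMaxIsotropic l Δ) (hΔ' : IsMaxIsotropic l Δ') :
    Nat.card Δ = Nat.card Δ' := by
  exact le_antisymm (card_le_aux l hl Δ Δ' hΔ hΔ') (card_le_aux l hl Δ' Δ hΔ' hΔ)
end

section
/- Let Λ be a finite commutative group, l an antisymmetric pairing on Λ, Δ a maximal isotropic subgroup, and s : Λ → GL(n,ℂ) a map such that: s(1) = 1; s(λλ')⁻¹·s(λ)·s(λ') is a scalar matrix for all λ,λ'; s(λ)·s(λ')·s(λ)⁻¹·s(λ')⁻¹ = l(λ)(λ')·1 for all λ,λ'; the restriction of s to Δ is a group homomorphism into diagonal matrices; and each s(λ) maps every weight space of the family {s(δ)}_{δ∈Δ} onto a weight space, with all nonzero blocks of s(λ) (in the coordinate block decomposition by weight spaces) equal to scalar multiples of identity matrices. Let Ŝ ⊆ Hom(Δ,ℂˣ) be the set of weights,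 i.e. characters χ for which the weight space W_χ := {v ∈ ℂⁿ : s(δ)v = χ(δ)v for all δ ∈ Δ} is nonzero. Define GL(n,ℂ)_θ := {A ∈ GL(n,ℂ) : A⁻¹·s(λ)·A·s(λ)⁻¹ is a scalar matrix for every λ ∈ Λ} and c_θ : GL(n,ℂ)_θ → Hom(Λ,ℂˣ) by c_θ(A)(λ)·1 := A⁻¹·s(λ)·A·s(λ)⁻¹. Then the image of c_θ equals the set of all γ ∈ Hom(Λ,ℂˣ) such that for every χ ∈ Ŝ the character χ·(γ|_Δ) again lies in Ŝ and dim W_{χ·(γ|_Δ)} = dim W_χ. -/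
/-- `M` is a permutation matrix whose nonzero blocks (with respect to the partition of the
coordinates into classes of the relation `R`) are scalar multiples of identity matrices. -/
def IsBlockScalarPerm {n : ℕ} (R : Fin n → Fin n → Prop)
    (M : Matrix (Fin n) (Fin n) ℂ) : Prop :=
  ∃ σ : Equiv.Perm (Fin n),
    (∀ i j : Fin n, i ≠ σ j → M i j = 0) ∧
    (∀ j : Fin n, M (σ j) j ≠ 0) ∧
    (∀ j j' : Fin n, R j j' → R (σ j) (σ j')) ∧
    (∀ j j' : Fin n, R j j' → M (σ j) j = M (σ j') j') ∧
    (∀ j j' : Fin n, R j j' → j ≤ j' → σ j ≤ σ j')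

/-- The weight space `W_χ = {v ∈ ℂⁿ : s(δ) v = χ(δ) v for all δ ∈ Δ}` of a character
`χ : Δ → ℂˣ` for the family `{s(δ)}_{δ∈Δ}`. -/
noncomputable def weightSpace {Λ : Type*} [CommGroup Λ] {n : ℕ} (Δ : Subgroup Λ)
    (s : Λ → (Matrix (Fin n) (Fin n) ℂ)ˣ) (χ : Δ →* ℂˣ) : Submodule ℂ (Fin n → ℂ) :=
  ⨅ d : Δ, Module.End.eigenspace
    (Matrix.mulVecLin ((s (d : Λ) : Matrix (Fin n) (Fin n) ℂ))) ((χ d : ℂ))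



open Finset

/-- Two strictly monotone maps from a finite set onto sets of the same size agree. -/
lemma strictMonoOn_fiber_unique {n : ℕ} (F G : Finset (Fin n)) (hFG : F.card = G.card)
    (u v : Fin n → Fin n)
    (hu : ∀ x ∈ F, u x ∈ G) (hv : ∀ x ∈ F, v x ∈ G)
    (hum : ∀ x ∈ F, ∀ y ∈ F, x < y → u x < u y)
    (hvm : ∀ x ∈ F, ∀ y ∈ F, x < y → v x < v y) :
    ∀ x ∈ F, u x = v x := by
  classical
  -- rank of an element of G
  have rank_eq : ∀ (w : Fin n → Fin n), (∀ x ∈ F, w x ∈ G) →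
      (∀ x ∈ F, ∀ y ∈ F, x < y → w x < w y) →
      ∀ x ∈ F, (G.filter (fun y => y < w x)).card = (F.filter (fun z => z < x)).card := by
    intro w hw hwm x hx
    have hinj : ∀ a₁ a₂ (_ : a₁ ∈ F) (_ : a₂ ∈ F), w a₁ = w a₂ → a₁ = a₂ := by
      intro a b ha hb hab
      rcases lt_trichotomy a b with h | h | h
      · exact absurd hab (ne_of_lt (hwm a ha b hb h))
      · exact h
      · exact absurd hab.symm (ne_of_lt (hwm b hb a ha h))
    have hsurj := Finset.surj_on_of_inj_on_of_card_le (s := F) (t := G)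
      (fun a _ => w a) (fun a ha => hw a ha) hinj hFG.ge
    have himg : G.filter (fun y => y < w x) = (F.filter (fun z => z < x)).image w := by
      ext y
      simp only [mem_filter, mem_image]
      constructor
      · rintro ⟨hyG, hy⟩
        obtain ⟨z, hz, rfl⟩ := hsurj y hyG
        refine ⟨z, ⟨hz, ?_⟩, rfl⟩
        rcases lt_trichotomy z x with h | h | h
        · exact h
        · subst h; exact absurd hy (lt_irrefl _)
        · exact absurd (hwm x hx z hz h) (fun h' => absurd (h'.trans hy) (lt_irrefl _))
      · rintro ⟨z, ⟨hz, hzx⟩, rfl⟩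
        exact ⟨hw z hz, hwm z hz x hx hzx⟩
    rw [himg, Finset.card_image_of_injOn (fun a ha b hb => hinj a b
      (mem_filter.mp ha).1 (mem_filter.mp hb).1)]
  intro x hx
  have h1 := rank_eq u hu hum x hx
  have h2 := rank_eq v hv hvm x hx
  have h3 : (G.filter (fun y => y < u x)).card = (G.filter (fun y => y < v x)).card :=
    h1.trans h2.symm
  by_contra hne
  rcases lt_or_gt_of_ne hne with h | h
  · have hss : G.filter (fun y => y < u x) ⊂ G.filter (fun y => y < v x) := by
      constructor
      · intro y hy
        rw [mem_filter] at hy ⊢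
        exact ⟨hy.1, hy.2.trans h⟩
      · intro hsub
        have := hsub (mem_filter.mpr ⟨hu x hx, h⟩)
        exact absurd (mem_filter.mp this).2 (lt_irrefl _)
    exact absurd h3 (ne_of_lt (Finset.card_lt_card hss))
  · have hss : G.filter (fun y => y < v x) ⊂ G.filter (fun y => y < u x) := by
      constructor
      · intro y hy
        rw [mem_filter] at hy ⊢
        exact ⟨hy.1, hy.2.trans h⟩
      · intro hsub
        have := hsub (mem_filter.mpr ⟨hv x hx, h⟩)
        exact absurd (mem_filter.mp this).2 (lt_irrefl _)
    exact absurd h3.symm (ne_of_lt (Finset.card_lt_card hss))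

open Finset

section rank

variable {n : ℕ}

private def rk (t : Finset (Fin n)) (x : Fin n) : ℕ := (t.filter (fun y => y < x)).card

lemma rk_lt_card {t : Finset (Fin n)} {x : Fin n} (hx : x ∈ t) : rk t x < t.card := by
  apply Finset.card_lt_card
  constructor
  · exact Finset.filter_subset _ _
  · intro hsub
    exact absurd (mem_filter.mp (hsub hx)).2 (lt_irrefl x)

lemma rk_strictMono {t : Finset (Fin n)} {x y : Fin n} (hx : x ∈ t) (hxy : x < y) :
    rk t x < rk t y := by
  apply Finset.card_lt_card
  constructor
  · intro z hz
    rw [mem_filter] at hz ⊢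
    exact ⟨hz.1, hz.2.trans hxy⟩
  · intro hsub
    exact absurd (mem_filter.mp (hsub (mem_filter.mpr ⟨hx, hxy⟩))).2 (lt_irrefl x)

lemma rk_inj {t : Finset (Fin n)} {x y : Fin n} (hx : x ∈ t) (hy : y ∈ t)
    (h : rk t x = rk t y) : x = y := by
  rcases lt_trichotomy x y with hc | hc | hc
  · exact absurd h (ne_of_lt (rk_strictMono hx hc))
  · exact hc
  · exact absurd h.symm (ne_of_lt (rk_strictMono hy hc))

lemma rk_lt_iff {t : Finset (Fin n)} {x y : Fin n} (hx : x ∈ t) (hy : y ∈ t) :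
    rk t x < rk t y ↔ x < y := by
  constructor
  · intro h
    rcases lt_trichotomy x y with hc | hc | hc
    · exact hc
    · subst hc; exact absurd h (lt_irrefl _)
    · exact absurd (rk_strictMono hy hc) (fun h' => absurd (h.trans h') (lt_irrefl _))
  · exact rk_strictMono hx

lemma exists_rk (t : Finset (Fin n)) (r : ℕ) (hr : r < t.card) :
    ∃ x ∈ t, rk t x = r := by
  classical
  have himg : t.image (rk t) = Finset.range t.card := by
    apply Finset.eq_of_subset_of_card_le
    · intro m hm
      obtain ⟨x, hx, rfl⟩ := Finset.mem_image.mp hm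
      exact Finset.mem_range.mpr (rk_lt_card hx)
    · rw [Finset.card_range, Finset.card_image_of_injOn (fun a ha b hb => rk_inj ha hb)]
  have : r ∈ t.image (rk t) := himg ▸ Finset.mem_range.mpr hr
  obtain ⟨x, hx, hxr⟩ := Finset.mem_image.mp this
  exact ⟨x, hx, hxr⟩

end rank

/-- Existence of a permutation shifting fibers of `D` by `g`, strictly monotone on fibers. -/
lemma exists_fiber_perm {n : ℕ} {C : Type*} [CommGroup C] [DecidableEq C] (D : Fin n → C) (g : C)
    (hcount : ∀ i : Fin n,
      (univ.filter (fun j => D j = D i * g)).card = (univ.filter (fun j => D j = D i)).card) :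
    ∃ τ : Equiv.Perm (Fin n), (∀ i, D (τ i) = D i * g) ∧
      (∀ i j : Fin n, D i = D j → i < j → τ i < τ j) := by
  classical
  set F : Fin n → Finset (Fin n) := fun i => univ.filter (fun j => D j = D i) with hF
  set T : Fin n → Finset (Fin n) := fun i => univ.filter (fun j => D j = D i * g) with hT
  have hmemF : ∀ i, i ∈ F i := fun i => mem_filter.mpr ⟨mem_univ i, rfl⟩
  have hchoice : ∀ i : Fin n, ∃ x ∈ T i, rk (T i) x = rk (F i) i := by
    intro i
    exact exists_rk _ _ (lt_of_lt_of_le (rk_lt_card (hmemF i)) (hcount i).ge)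
  choose τ₀ hτ₀mem hτ₀rk using hchoice
  have hD : ∀ i, D (τ₀ i) = D i * g := fun i => (mem_filter.mp (hτ₀mem i)).2
  have hFeq : ∀ i j : Fin n, D i = D j → F i = F j := by
    intro i j hij; simp only [hF, hij]
  have hTeq : ∀ i j : Fin n, D i = D j → T i = T j := by
    intro i j hij; simp only [hT, hij]
  have hmono : ∀ i j : Fin n, D i = D j → i < j → τ₀ i < τ₀ j := by
    intro i j hij hlt
    have h1 : rk (T i) (τ₀ i) < rk (T i) (τ₀ j) := by
      rw [hτ₀rk i, hTeq i j hij, hτ₀rk j, ← hFeq i j hij]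
      exact rk_strictMono (hmemF i) hlt
    exact (rk_lt_iff (hτ₀mem i) (by rw [hTeq i j hij]; exact hτ₀mem j)).mp h1
  have hinj : Function.Injective τ₀ := by
    intro i j hij
    have hDij : D i = D j := by
      have : D i * g = D j * g := by rw [← hD i, ← hD j, hij]
      exact mul_right_cancel this
    have h1 : rk (F i) i = rk (F i) j := by
      have := hτ₀rk i
      have h2 := hτ₀rk j
      rw [← hTeq i j hDij, ← hij] at h2
      rw [← this, h2, hFeq i j hDij]
    exact rk_inj (hmemF i) (by rw [hFeq i j hDij]; exact hmemF j) h1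
  refine ⟨Equiv.ofBijective τ₀ (Finite.injective_iff_bijective.mp hinj), hD, hmono⟩

open Finset in
/-- Core combinatorial construction: a fiber-shifting permutation `τ` commuting with all the
`σ a`, together with a compatible system of scalars `ε`. -/
lemma core_construction {n : ℕ} {Λ : Type*} [CommGroup Λ] {C : Type*} [CommGroup C]
    [DecidableEq C]
    (D : Fin n → C) (μ : Λ →* C) (g : C) (γ : Λ →* ℂˣ)
    (σ : Λ → Equiv.Perm (Fin n)) (c : Λ → Fin n → ℂˣ)
    (hDσ : ∀ a i, D (σ a i) = D i * μ a)
    (hcblock : ∀ a (i j : Fin n), D i = D j → c a i = c a j)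
    (hσmono : ∀ a (i j : Fin n), D i = D j → i ≤ j → σ a i ≤ σ a j)
    (hcoc : ∀ a b : Λ, ∃ z : ℂˣ, ∀ i, σ (a*b) i = σ a (σ b i) ∧
      c (a*b) i * z = c a (σ b i) * c b i)
    (hker : ∀ a : Λ, μ a = 1 → (∀ i, σ a i = i) ∧
      (∀ i j : Fin n, D j = D i * g → c a j = γ a * c a i))
    (hcount : ∀ i : Fin n,
      (univ.filter (fun j => D j = D i * g)).card = (univ.filter (fun j => D j = D i)).card) :
    ∃ (τ : Equiv.Perm (Fin n)) (ε : Fin n → ℂˣ),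
      (∀ a i, σ a (τ i) = τ (σ a i)) ∧
      (∀ a i, ε i * c a (τ i) = γ a * c a i * ε (σ a i)) := by
  classical
  obtain ⟨τ, hτD, hτmono⟩ := exists_fiber_perm D g hcount
  -- cardinalities of fibers are invariant under multiplication by `μ a`
  have hcardμ : ∀ (a : Λ) (χ : C),
      (univ.filter (fun j => D j = χ * μ a)).card = (univ.filter (fun j => D j = χ)).card := by
    intro a χ
    apply Finset.card_bij (fun (j : Fin n) _ => (σ a).symm j)
    · intro j hj
      rw [mem_filter] at hj ⊢
      refine ⟨mem_univ _, ?_⟩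
      have h2 := hDσ a ((σ a).symm j)
      rw [Equiv.apply_symm_apply, hj.2] at h2
      exact mul_right_cancel h2.symm
    · intro j₁ h₁ j₂ h₂ h
      exact (σ a).symm.injective h
    · intro j hj
      refine ⟨σ a j, ?_, by simp⟩
      rw [mem_filter] at hj ⊢
      exact ⟨mem_univ _, by rw [hDσ, hj.2]⟩
  -- τ and each σ a commute
  have hστ : ∀ a i, σ a (τ i) = τ (σ a i) := by
    intro a i
    set F : Finset (Fin n) := univ.filter (fun j => D j = D i) with hFdef
    set G : Finset (Fin n) := univ.filter (fun j => D j = D i * g * μ a) with hGdef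
    have hcardFG : F.card = G.card := by
      rw [hGdef, hcardμ a (D i * g), hcount i]
    have hu : ∀ x ∈ F, σ a (τ x) ∈ G := by
      intro x hx
      rw [mem_filter] at hx ⊢
      exact ⟨mem_univ _, by rw [hDσ, hτD, hx.2]⟩
    have hv : ∀ x ∈ F, τ (σ a x) ∈ G := by
      intro x hx
      rw [mem_filter] at hx ⊢
      refine ⟨mem_univ _, ?_⟩
      rw [hτD, hDσ, hx.2, mul_assoc, mul_comm (μ a) g, ← mul_assoc]
    have hum : ∀ x ∈ F, ∀ y ∈ F, x < y → σ a (τ x) < σ a (τ y) := by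
      intro x hx y hy hlt
      rw [mem_filter] at hx hy
      have hDxy : D x = D y := by rw [hx.2, hy.2]
      have h1 : τ x < τ y := hτmono x y hDxy hlt
      have h2 : σ a (τ x) ≤ σ a (τ y) :=
        hσmono a _ _ (by rw [hτD, hτD, hDxy]) h1.le
      exact lt_of_le_of_ne h2 (fun h => absurd ((σ a).injective h) (ne_of_lt h1))
    have hvm : ∀ x ∈ F, ∀ y ∈ F, x < y → τ (σ a x) < τ (σ a y) := by
      intro x hx y hy hlt
      rw [mem_filter] at hx hy
      have hDxy : D x = D y := by rw [hx.2, hy.2]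
      have h1 : σ a x ≤ σ a y := hσmono a x y hDxy hlt.le
      have h1' : σ a x < σ a y :=
        lt_of_le_of_ne h1 (fun h => absurd ((σ a).injective h) (ne_of_lt hlt))
      exact hτmono _ _ (by rw [hDσ, hDσ, hDxy]) h1'
    exact strictMonoOn_fiber_unique F G hcardFG _ _ hu hv hum hvm i
      (mem_filter.mpr ⟨mem_univ _, rfl⟩)
  -- the crossed homomorphism h
  set h : Λ → Fin n → ℂˣ := fun a i => c a (τ i) * (γ a * c a i)⁻¹ with hh
  have H0 : ∀ a (i j : Fin n), D i = D j → h a i = h a j := by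
    intro a i j hij
    rw [hh]
    simp only
    rw [hcblock a i j hij, hcblock a (τ i) (τ j) (by rw [hτD, hτD, hij])]
  have H1 : ∀ a b i, h (a * b) i = h a (σ b i) * h b i := by
    intro a b i
    obtain ⟨z, hz⟩ := hcoc a b
    have e1 := (hz (τ i)).2
    have e2 := (hz i).2
    rw [hστ b i] at e1
    apply Units.ext
    have hγ : γ (a * b) = γ a * γ b := map_mul γ a b
    have ec1 : (c (a*b) (τ i) : ℂ) * z = c a (τ (σ b i)) * c b (τ i) := by
      exact_mod_cast congrArg Units.val e1
    have ec2 : (c (a*b) i : ℂ) * z = c a (σ b i) * c b i := by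
      exact_mod_cast congrArg Units.val e2
    rw [hh]
    simp only [Units.val_mul, Units.val_inv_eq_inv_val, hγ]
    field_simp
    -- goal: equation among nonzero complexes
    have hzne : (z : ℂ) ≠ 0 := z.ne_zero
    have key : (c (a*b) (τ i) : ℂ) * ((c a (σ b i) : ℂ) * (c b i : ℂ))
        = (c a (τ (σ b i)) : ℂ) * (c b (τ i) : ℂ) * (c (a*b) i : ℂ) := by
      have : ((c (a*b) (τ i) : ℂ) * z) * ((c (a*b) i : ℂ)) =
          ((c (a*b) i : ℂ) * z) * (c (a*b) (τ i) : ℂ) := by ring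
      rw [ec1, ec2] at this
      apply mul_left_cancel₀ hzne
      calc (z:ℂ) * ((c (a*b) (τ i) : ℂ) * ((c a (σ b i) : ℂ) * (c b i : ℂ)))
          = ((c (a*b) (τ i) : ℂ) * z) * ((c a (σ b i) : ℂ) * (c b i : ℂ)) := by ring
        _ = ((c a (τ (σ b i)) : ℂ) * (c b (τ i) : ℂ)) * ((c a (σ b i) : ℂ) * (c b i : ℂ)) := by
            rw [ec1]
        _ = ((c a (τ (σ b i)) : ℂ) * (c b (τ i) : ℂ)) * ((c (a*b) i : ℂ) * z) := by rw [← ec2]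
        _ = (z:ℂ) * ((c a (τ (σ b i)) : ℂ) * (c b (τ i) : ℂ) * (c (a*b) i : ℂ)) := by ring
    linear_combination key
  have H2 : ∀ a i, μ a = 1 → h a i = 1 := by
    intro a i ha
    have := (hker a ha).2 i (τ i) (hτD i)
    rw [hh]
    simp only [this]
    group
  have W : ∀ a b (i : Fin n), μ a = μ b → h a i = h b i := by
    intro a b i hab
    have hc : μ (a * b⁻¹) = 1 := by
      rw [map_mul, map_inv, hab, mul_inv_cancel]
    have : h ((a * b⁻¹) * b) i = h (a * b⁻¹) (σ b i) * h b i := H1 _ _ _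
    rw [H2 _ _ hc, one_mul] at this
    rw [← this]
    congr 1
    group
  -- orbits and representatives
  set orb : Fin n → Finset (Fin n) := fun i => univ.filter (fun j => ∃ a, D j = D i * μ a)
    with horb
  have hmem_orb : ∀ i, i ∈ orb i := by
    intro i
    rw [horb]
    exact mem_filter.mpr ⟨mem_univ _, ⟨1, by simp⟩⟩
  have horb_eq : ∀ i j : Fin n, (∃ a, D j = D i * μ a) → orb j = orb i := by
    intro i j ⟨a, ha⟩
    rw [horb]
    ext k
    simp only [mem_filter, mem_univ, true_and]
    constructor
    · rintro ⟨b, hb⟩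
      exact ⟨a * b, by rw [hb, ha, map_mul, mul_assoc]⟩
    · rintro ⟨b, hb⟩
      refine ⟨a⁻¹ * b, ?_⟩
      rw [hb, ha, map_mul, map_inv]
      group
  set rep : Fin n → Fin n := fun i => (orb i).min' ⟨i, hmem_orb i⟩ with hrep
  have hrep_mem : ∀ i, rep i ∈ orb i := fun i => Finset.min'_mem _ _
  have hrep_eq : ∀ i j : Fin n, (∃ a, D j = D i * μ a) → rep j = rep i := by
    intro i j hij
    rw [hrep]
    simp only
    congr 1
    exact horb_eq i j hij
  have hrep_orbit : ∀ i, ∃ a, D i = D (rep i) * μ a := by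
    intro i
    have := hrep_mem i
    rw [horb, mem_filter] at this
    obtain ⟨a, ha⟩ := this.2
    exact ⟨a⁻¹, by rw [ha, map_inv]; group⟩
  choose w hw using hrep_orbit
  set ε : Fin n → ℂˣ := fun i => h (w i) (rep i) with hε
  refine ⟨τ, ε, hστ, ?_⟩
  intro a i
  -- rep (σ a i) = rep i
  have hrepσ : rep (σ a i) = rep i := hrep_eq i (σ a i) ⟨a, hDσ a i⟩
  -- μ (w (σ a i)) = μ (a * w i)
  have hμw : μ (w (σ a i)) = μ (a * w i) := by
    have h1 : D (σ a i) = D (rep i) * μ (w (σ a i)) := by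
      rw [← hrepσ]; exact hw (σ a i)
    have h2 : D (σ a i) = D (rep i) * μ (a * w i) := by
      rw [hDσ, hw i, map_mul]
      rw [mul_comm (μ a) (μ (w i)), ← mul_assoc]
    exact mul_left_cancel (h1.symm.trans h2)
  have hεσ : ε (σ a i) = h a i * ε i := by
    rw [hε]
    simp only
    rw [hrepσ]
    rw [W _ (a * w i) _ hμw, H1 a (w i) (rep i)]
    congr 1
    apply H0
    rw [hDσ, ← hw i]
  -- conclude
  rw [hεσ, hh]
  apply Units.ext
  simp only [Units.val_mul, Units.val_inv_eq_inv_val]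
  field_simp

section WS

open Finset

variable {Λ : Type*} [CommGroup Λ] {n : ℕ} (Δ : Subgroup Λ)
  (s : Λ → (Matrix (Fin n) (Fin n) ℂ)ˣ)

lemma mem_weightSpace_iff (χ : Δ →* ℂˣ) (v : Fin n → ℂ) :
    v ∈ weightSpace Δ s χ ↔
      ∀ d : Δ, (s (d : Λ) : Matrix (Fin n) (Fin n) ℂ).mulVec v = (χ d : ℂ) • v := by
  simp [weightSpace, Submodule.mem_iInf, Module.End.mem_eigenspace_iff,
    Matrix.mulVecLin_apply]

lemma diag_mulVec {M : Matrix (Fin n) (Fin n) ℂ} (hM : M.IsDiag) (v : Fin n → ℂ) (i : Fin n) :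
    M.mulVec v i = M i i * v i := by
  rw [Matrix.mulVec, dotProduct]
  apply Finset.sum_eq_single i
  · intro k _ hk
    rw [hM (Ne.symm hk), zero_mul]
  · intro h; exact absurd (mem_univ i) h

variable (hdiag : ∀ d ∈ Δ, ((s d : Matrix (Fin n) (Fin n) ℂ)).IsDiag)

include hdiag in
lemma mem_weightSpace_iff' (χ : Δ →* ℂˣ) (v : Fin n → ℂ) :
    v ∈ weightSpace Δ s χ ↔
      ∀ i : Fin n, v i ≠ 0 →
        ∀ d : Δ, (s (d : Λ) : Matrix (Fin n) (Fin n) ℂ) i i = (χ d : ℂ) := by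
  rw [mem_weightSpace_iff]
  constructor
  · intro h i hvi d
    have := congrFun (h d) i
    rw [diag_mulVec (hdiag _ d.2) v i] at this
    exact mul_right_cancel₀ hvi (by simpa using this)
  · intro h d
    funext i
    rw [diag_mulVec (hdiag _ d.2) v i, Pi.smul_apply, smul_eq_mul]
    by_cases hvi : v i = 0
    · rw [hvi, mul_zero, mul_zero]
    · rw [h i hvi d]

include hdiag in
lemma weightSpace_ne_bot_iff (χ : Δ →* ℂˣ) :
    weightSpace Δ s χ ≠ ⊥ ↔
      ∃ i : Fin n, ∀ d : Δ, (s (d : Λ) : Matrix (Fin n) (Fin n) ℂ) i i = (χ d : ℂ) := by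
  constructor
  · intro h
    obtain ⟨v, hv, hvne⟩ := Submodule.exists_mem_ne_zero_of_ne_bot h
    obtain ⟨i, hi⟩ := Function.ne_iff.mp hvne
    exact ⟨i, (mem_weightSpace_iff' Δ s hdiag χ v).mp hv i (by simpa using hi)⟩
  · rintro ⟨i, hi⟩
    intro hbot
    have hmem : (Pi.single i 1 : Fin n → ℂ) ∈ weightSpace Δ s χ := by
      rw [mem_weightSpace_iff' Δ s hdiag]
      intro j hvj d
      have : j = i := by
        by_contra hji
        exact hvj (Pi.single_eq_of_ne hji 1)
      rw [this]; exact hi d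
    rw [hbot, Submodule.mem_bot] at hmem
    have := congrFun hmem i
    simp [Pi.single_eq_same] at this

open scoped Classical in
include hdiag in
lemma finrank_weightSpace (χ : Δ →* ℂˣ) :
    Module.finrank ℂ (weightSpace Δ s χ) =
      (univ.filter (fun i : Fin n =>
        ∀ d : Δ, (s (d : Λ) : Matrix (Fin n) (Fin n) ℂ) i i = (χ d : ℂ))).card := by
  classical
  set P : Fin n → Prop := fun i =>
    ∀ d : Δ, (s (d : Λ) : Matrix (Fin n) (Fin n) ℂ) i i = (χ d : ℂ) with hP
  set E : ({i : Fin n // P i} → ℂ) →ₗ[ℂ] (Fin n → ℂ) :=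
    { toFun := fun w i => if h : P i then w ⟨i, h⟩ else 0
      map_add' := by
        intro w w'
        funext i
        by_cases h : P i
        · simp only [dif_pos h, Pi.add_apply]
        · simp only [dif_neg h, Pi.add_apply, add_zero]
      map_smul' := by
        intro t w
        funext i
        by_cases h : P i
        · simp only [dif_pos h, Pi.smul_apply, RingHom.id_apply]
        · simp only [dif_neg h, Pi.smul_apply, smul_zero, RingHom.id_apply] } with hE
  have hinj : Function.Injective E := by
    intro w w' hww
    funext p
    have := congrFun hww p.1
    simpa [hE, dif_pos p.2] using this
  have hrange : LinearMap.range E = weightSpace Δ s χ := by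
    ext v
    rw [LinearMap.mem_range, mem_weightSpace_iff' Δ s hdiag]
    constructor
    · rintro ⟨w, rfl⟩
      intro i hvi d
      by_cases h : P i
      · exact h d
      · exact absurd (by simp [hE, dif_neg h]) hvi
    · intro hv
      refine ⟨fun p => v p.1, ?_⟩
      funext i
      by_cases h : P i
      · simp [hE, dif_pos h]
      · simp only [hE, LinearMap.coe_mk, AddHom.coe_mk, dif_neg h]
        by_contra hvi
        exact h (hv i (Ne.symm hvi))
  rw [← hrange, LinearMap.finrank_range_of_inj hinj]
  rw [Module.finrank_pi ℂ]
  rw [Fintype.card_subtype]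

end WS

section MainAux

variable {n : ℕ}

lemma unit_smul_left (X Y : (Matrix (Fin n) (Fin n) ℂ)ˣ) (w : ℂ)
    (h : (X : Matrix (Fin n) (Fin n) ℂ) = w • 1) :
    ((X * Y : (Matrix (Fin n) (Fin n) ℂ)ˣ) : Matrix (Fin n) (Fin n) ℂ) =
      w • (Y : Matrix (Fin n) (Fin n) ℂ) := by
  rw [Units.val_mul, h, smul_mul_assoc, one_mul]

lemma unit_smul_right (X Y : (Matrix (Fin n) (Fin n) ℂ)ˣ) (w : ℂ)
    (h : (X : Matrix (Fin n) (Fin n) ℂ) = w • 1) :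
    ((Y * X : (Matrix (Fin n) (Fin n) ℂ)ˣ) : Matrix (Fin n) (Fin n) ℂ) =
      w • (Y : Matrix (Fin n) (Fin n) ℂ) := by
  rw [Units.val_mul, h, mul_smul_comm, mul_one]

end MainAux

/-- Let `(l, Δ, s)` be a representative triple for a finite commutative
group `Λ` acting on `GL(n,ℂ)`.  Then a character `γ : Λ → ℂˣ` lies in the image of
`c_θ : GL(n,ℂ)_θ → Hom(Λ,ℂˣ)`, `c_θ(A)(a)•1 = A⁻¹ s(a) A s(a)⁻¹`, if and only if for every
weight `χ` of `{s(δ)}_{δ∈Δ}` the character `χ·(γ|_Δ)` is again a weight with weight space of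
the same dimension. -/
theorem stmt_9 {Λ : Type*} [CommGroup Λ] [Finite Λ] {n : ℕ} (hn : 1 ≤ n)
    (l : Λ →* (Λ →* ℂˣ)) (hl : IsAntisymPairing l)
    (Δ : Subgroup Λ) (hΔ : IsMaxIsotropic l Δ)
    (s : Λ → (Matrix (Fin n) (Fin n) ℂ)ˣ)
    (h1 : s 1 = 1)
    (hscal : ∀ a b : Λ, ∃ z : ℂˣ,
      (((s (a * b))⁻¹ * s a * s b : (Matrix (Fin n) (Fin n) ℂ)ˣ) :
        Matrix (Fin n) (Fin n) ℂ) = (z : ℂ) • 1)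
    (hcomm : ∀ a b : Λ,
      ((s a * s b * (s a)⁻¹ * (s b)⁻¹ : (Matrix (Fin n) (Fin n) ℂ)ˣ) :
        Matrix (Fin n) (Fin n) ℂ) = ((l a b : ℂˣ) : ℂ) • 1)
    (hhom : ∀ d ∈ Δ, ∀ d' ∈ Δ, s (d * d') = s d * s d')
    (hdiag : ∀ d ∈ Δ, ((s d : Matrix (Fin n) (Fin n) ℂ)).IsDiag)
    (hblock : ∀ a : Λ, IsBlockScalarPerm
      (fun i j => ∀ d ∈ Δ, (s d : Matrix (Fin n) (Fin n) ℂ) i i =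
        (s d : Matrix (Fin n) (Fin n) ℂ) j j)
      (s a : Matrix (Fin n) (Fin n) ℂ)) :
    ∀ γ : Λ →* ℂˣ,
      (∃ A : (Matrix (Fin n) (Fin n) ℂ)ˣ, ∀ a : Λ,
        ((A⁻¹ * s a * A * (s a)⁻¹ : (Matrix (Fin n) (Fin n) ℂ)ˣ) :
          Matrix (Fin n) (Fin n) ℂ) = ((γ a : ℂˣ) : ℂ) • 1) ↔
      (∀ χ : Δ →* ℂˣ, weightSpace Δ s χ ≠ ⊥ →
        (weightSpace Δ s (χ * γ.comp Δ.subtype) ≠ ⊥ ∧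
          Module.finrank ℂ (weightSpace Δ s (χ * γ.comp Δ.subtype)) =
            Module.finrank ℂ (weightSpace Δ s χ))) := by
  classical
  intro γ
  constructor
  · -- Forward direction
    rintro ⟨A, hA⟩ χ hχ
    have key : ∀ a : Λ, (s a : Matrix (Fin n) (Fin n) ℂ) * (A : Matrix (Fin n) (Fin n) ℂ) =
        ((γ a : ℂˣ) : ℂ) • ((A : Matrix (Fin n) (Fin n) ℂ) * (s a : Matrix (Fin n) (Fin n) ℂ)) := by
      intro a
      have hu : (s a * A : (Matrix (Fin n) (Fin n) ℂ)ˣ) =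
          A * ((A⁻¹ * s a * A * (s a)⁻¹) * s a) := by group
      calc (s a : Matrix (Fin n) (Fin n) ℂ) * (A : Matrix (Fin n) (Fin n) ℂ)
          = ((s a * A : (Matrix (Fin n) (Fin n) ℂ)ˣ) : Matrix (Fin n) (Fin n) ℂ) := by
            rw [Units.val_mul]
        _ = ((A * ((A⁻¹ * s a * A * (s a)⁻¹) * s a) : (Matrix (Fin n) (Fin n) ℂ)ˣ) :
              Matrix (Fin n) (Fin n) ℂ) := by rw [← hu]
        _ = (A : Matrix (Fin n) (Fin n) ℂ) *
              (((A⁻¹ * s a * A * (s a)⁻¹) * s a : (Matrix (Fin n) (Fin n) ℂ)ˣ) :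
                Matrix (Fin n) (Fin n) ℂ) := by rw [Units.val_mul]
        _ = ((γ a : ℂˣ) : ℂ) • ((A : Matrix (Fin n) (Fin n) ℂ) * (s a : Matrix (Fin n) (Fin n) ℂ)) := by
            rw [unit_smul_left _ _ _ (hA a), mul_smul_comm]
    have keyinv : ∀ a : Λ,
        (s a : Matrix (Fin n) (Fin n) ℂ) * ((A⁻¹ : (Matrix (Fin n) (Fin n) ℂ)ˣ) : Matrix (Fin n) (Fin n) ℂ) =
        (((γ a : ℂˣ) : ℂ))⁻¹ • (((A⁻¹ : (Matrix (Fin n) (Fin n) ℂ)ˣ) : Matrix (Fin n) (Fin n) ℂ) *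
          (s a : Matrix (Fin n) (Fin n) ℂ)) := by
      intro a
      have hu : (A⁻¹ * s a : (Matrix (Fin n) (Fin n) ℂ)ˣ) =
          (A⁻¹ * s a * A * (s a)⁻¹) * (s a * A⁻¹) := by group
      have h2 : ((A⁻¹ * s a : (Matrix (Fin n) (Fin n) ℂ)ˣ) : Matrix (Fin n) (Fin n) ℂ) =
          ((γ a : ℂˣ) : ℂ) • ((s a * A⁻¹ : (Matrix (Fin n) (Fin n) ℂ)ˣ) : Matrix (Fin n) (Fin n) ℂ) := by
        rw [hu]
        exact unit_smul_left _ _ _ (hA a)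
      rw [Units.val_mul] at h2
      have h3 : ((s a * A⁻¹ : (Matrix (Fin n) (Fin n) ℂ)ˣ) : Matrix (Fin n) (Fin n) ℂ) =
          (s a : Matrix (Fin n) (Fin n) ℂ) * ((A⁻¹ : (Matrix (Fin n) (Fin n) ℂ)ˣ) : Matrix (Fin n) (Fin n) ℂ) :=
        Units.val_mul _ _
      rw [h3] at h2
      rw [h2, smul_smul, inv_mul_cancel₀ (Units.ne_zero (γ a)), one_smul]
    have hmapsto : ∀ v ∈ weightSpace Δ s χ,
        (A : Matrix (Fin n) (Fin n) ℂ).mulVec v ∈ weightSpace Δ s (χ * γ.comp Δ.subtype) := by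
      intro v hv
      rw [mem_weightSpace_iff] at hv ⊢
      intro d
      rw [Matrix.mulVec_mulVec, key (d : Λ), Matrix.smul_mulVec,
        ← Matrix.mulVec_mulVec, hv d, Matrix.mulVec_smul]
      have hev : (((χ * γ.comp Δ.subtype) d : ℂˣ) : ℂ) = (χ d : ℂ) * ((γ (d : Λ) : ℂˣ) : ℂ) := by
        simp
      rw [hev, smul_smul, mul_comm]
    have hmapstoinv : ∀ v ∈ weightSpace Δ s (χ * γ.comp Δ.subtype),
        ((A⁻¹ : (Matrix (Fin n) (Fin n) ℂ)ˣ) : Matrix (Fin n) (Fin n) ℂ).mulVec v ∈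
          weightSpace Δ s χ := by
      intro v hv
      rw [mem_weightSpace_iff] at hv ⊢
      intro d
      rw [Matrix.mulVec_mulVec, keyinv (d : Λ), Matrix.smul_mulVec,
        ← Matrix.mulVec_mulVec, hv d, Matrix.mulVec_smul]
      have hev : (((χ * γ.comp Δ.subtype) d : ℂˣ) : ℂ) = (χ d : ℂ) * ((γ (d : Λ) : ℂˣ) : ℂ) := by
        simp
      rw [hev, smul_smul]
      have hγne : ((γ (d : Λ) : ℂˣ) : ℂ) ≠ 0 := Units.ne_zero _
      congr 1
      field_simp
    have hAv : ∀ v : Fin n → ℂ, (A : Matrix (Fin n) (Fin n) ℂ).mulVec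
        (((A⁻¹ : (Matrix (Fin n) (Fin n) ℂ)ˣ) : Matrix (Fin n) (Fin n) ℂ).mulVec v) = v := by
      intro v
      rw [Matrix.mulVec_mulVec, ← Units.val_mul]
      simp
    have hA'v : ∀ v : Fin n → ℂ,
        ((A⁻¹ : (Matrix (Fin n) (Fin n) ℂ)ˣ) : Matrix (Fin n) (Fin n) ℂ).mulVec
        ((A : Matrix (Fin n) (Fin n) ℂ).mulVec v) = v := by
      intro v
      rw [Matrix.mulVec_mulVec, ← Units.val_mul]
      simp
    constructor
    · obtain ⟨v, hv, hvne⟩ := Submodule.exists_mem_ne_zero_of_ne_bot hχ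
      rw [Submodule.ne_bot_iff]
      refine ⟨(A : Matrix (Fin n) (Fin n) ℂ).mulVec v, hmapsto v hv, ?_⟩
      intro hc
      apply hvne
      rw [← hA'v v, hc, Matrix.mulVec_zero]
    · set f : weightSpace Δ s χ →ₗ[ℂ] weightSpace Δ s (χ * γ.comp Δ.subtype) :=
        LinearMap.restrict (Matrix.mulVecLin (A : Matrix (Fin n) (Fin n) ℂ))
          (fun x hx => by rw [Matrix.mulVecLin_apply]; exact hmapsto x hx) with hf
      have hbij : Function.Bijective f := by
        constructor
        · intro x y hxy
          apply Subtype.ext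
          have := congrArg Subtype.val hxy
          rw [hf] at this
          simp only [LinearMap.restrict_apply, Matrix.mulVecLin_apply] at this
          rw [← hA'v x.1, this, hA'v]
        · intro w
          refine ⟨⟨((A⁻¹ : (Matrix (Fin n) (Fin n) ℂ)ˣ) : Matrix (Fin n) (Fin n) ℂ).mulVec w.1,
            hmapstoinv w.1 w.2⟩, ?_⟩
          apply Subtype.ext
          rw [hf]
          simp only [LinearMap.restrict_apply, Matrix.mulVecLin_apply]
          exact hAv w.1
      exact ((LinearEquiv.ofBijective f hbij).finrank_eq).symm
  · -- Backward direction
    intro hRHS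
    have hb : ∀ a : Λ, ∃ σ : Equiv.Perm (Fin n),
        (∀ i j : Fin n, i ≠ σ j → (s a : Matrix (Fin n) (Fin n) ℂ) i j = 0) ∧
        (∀ j : Fin n, (s a : Matrix (Fin n) (Fin n) ℂ) (σ j) j ≠ 0) ∧
        (∀ j j' : Fin n, (∀ d ∈ Δ, (s d : Matrix (Fin n) (Fin n) ℂ) j j =
          (s d : Matrix (Fin n) (Fin n) ℂ) j' j') → ∀ d ∈ Δ,
          (s d : Matrix (Fin n) (Fin n) ℂ) (σ j) (σ j) =
          (s d : Matrix (Fin n) (Fin n) ℂ) (σ j') (σ j')) ∧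
        (∀ j j' : Fin n, (∀ d ∈ Δ, (s d : Matrix (Fin n) (Fin n) ℂ) j j =
          (s d : Matrix (Fin n) (Fin n) ℂ) j' j') →
          (s a : Matrix (Fin n) (Fin n) ℂ) (σ j) j = (s a : Matrix (Fin n) (Fin n) ℂ) (σ j') j') ∧
        (∀ j j' : Fin n, (∀ d ∈ Δ, (s d : Matrix (Fin n) (Fin n) ℂ) j j =
          (s d : Matrix (Fin n) (Fin n) ℂ) j' j') → j ≤ j' → σ j ≤ σ j') := hblock
    choose σ hz hnz hRp hcp hmp using hb
    -- diagonal entries are nonzero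
    have hdfix : ∀ d ∈ Δ, ∀ i : Fin n, σ d i = i := by
      intro d hd i
      by_contra hne
      exact hnz d i (hdiag d hd hne)
    have hdne : ∀ (d : Λ), d ∈ Δ → ∀ i : Fin n, (s d : Matrix (Fin n) (Fin n) ℂ) i i ≠ 0 := by
      intro d hd i
      have := hnz d i
      rwa [hdfix d hd i] at this
    -- multiplicativity of diagonal entries on Δ
    have hrowdiag : ∀ (d : Λ), d ∈ Δ → ∀ (P : Matrix (Fin n) (Fin n) ℂ) (j i : Fin n),
        ((s d : Matrix (Fin n) (Fin n) ℂ) * P) j i = (s d : Matrix (Fin n) (Fin n) ℂ) j j * P j i := by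
      intro d hd P j i
      rw [Matrix.mul_apply]
      apply Finset.sum_eq_single j
      · intro k _ hk
        rw [hdiag d hd (Ne.symm hk), zero_mul]
      · intro h; exact absurd (Finset.mem_univ j) h
    have hcoldiag : ∀ (d : Λ), d ∈ Δ → ∀ (P : Matrix (Fin n) (Fin n) ℂ) (j i : Fin n),
        (P * (s d : Matrix (Fin n) (Fin n) ℂ)) j i = P j i * (s d : Matrix (Fin n) (Fin n) ℂ) i i := by
      intro d hd P j i
      rw [Matrix.mul_apply]
      apply Finset.sum_eq_single i
      · intro k _ hk
        rw [hdiag d hd hk, mul_zero]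
      · intro h; exact absurd (Finset.mem_univ i) h
    have hcolperm : ∀ (a : Λ) (P : Matrix (Fin n) (Fin n) ℂ) (j i : Fin n),
        (P * (s a : Matrix (Fin n) (Fin n) ℂ)) j i =
          P j (σ a i) * (s a : Matrix (Fin n) (Fin n) ℂ) (σ a i) i := by
      intro a P j i
      rw [Matrix.mul_apply]
      apply Finset.sum_eq_single (σ a i)
      · intro k _ hk
        rw [hz a k i hk, mul_zero]
      · intro h; exact absurd (Finset.mem_univ _) h
    have hmulΔ : ∀ (d : Λ), d ∈ Δ → ∀ (d' : Λ), d' ∈ Δ → ∀ i : Fin n,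
        (s (d * d') : Matrix (Fin n) (Fin n) ℂ) i i =
          (s d : Matrix (Fin n) (Fin n) ℂ) i i * (s d' : Matrix (Fin n) (Fin n) ℂ) i i := by
      intro d hd d' hd' i
      rw [hhom d hd d' hd', Units.val_mul, hrowdiag d hd]
    -- the diagonal character family D
    set D : Fin n → (Δ →* ℂˣ) := fun i =>
      { toFun := fun d => Units.mk0 ((s (d : Λ) : Matrix (Fin n) (Fin n) ℂ) i i) (hdne _ d.2 i)
        map_one' := by
          apply Units.ext
          show (s ((1 : Δ) : Λ) : Matrix (Fin n) (Fin n) ℂ) i i = ((1 : ℂˣ) : ℂ)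
          rw [OneMemClass.coe_one, h1, Units.val_one, Units.val_one]
          exact Matrix.one_apply_eq i
        map_mul' := by
          intro d d'
          apply Units.ext
          rw [Units.val_mul]
          show (s ((d * d' : Δ) : Λ) : Matrix (Fin n) (Fin n) ℂ) i i =
            (s ((d : Δ) : Λ) : Matrix (Fin n) (Fin n) ℂ) i i *
            (s ((d' : Δ) : Λ) : Matrix (Fin n) (Fin n) ℂ) i i
          rw [Subgroup.coe_mul]
          exact hmulΔ _ d.2 _ d'.2 i } with hD
    have hDval : ∀ (i : Fin n) (d : Δ), ((D i d : ℂˣ) : ℂ) = (s (d : Λ) : Matrix (Fin n) (Fin n) ℂ) i i :=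
      fun i d => rfl
    -- the pairing character μ
    set μ : Λ →* (Δ →* ℂˣ) := {
      toFun := fun a =>
        { toFun := fun d => l (d : Λ) a
          map_one' := by
            show l ((1 : Δ) : Λ) a = 1
            rw [OneMemClass.coe_one, map_one l, MonoidHom.one_apply]
          map_mul' := by
            intro d d'
            show l ((d * d' : Δ) : Λ) a = l ((d : Δ) : Λ) a * l ((d' : Δ) : Λ) a
            rw [Subgroup.coe_mul, map_mul l, MonoidHom.mul_apply] }
      map_one' := by
        apply MonoidHom.ext
        intro d
        simp only [MonoidHom.coe_mk, OneHom.coe_mk, MonoidHom.one_apply]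
        exact map_one (l (d : Λ))
      map_mul' := by
        intro a b
        apply MonoidHom.ext
        intro d
        simp only [MonoidHom.coe_mk, OneHom.coe_mk, MonoidHom.mul_apply]
        exact map_mul (l (d : Λ)) a b } with hμ
    -- the scalars c
    set c : Λ → Fin n → ℂˣ := fun a i =>
      Units.mk0 ((s a : Matrix (Fin n) (Fin n) ℂ) (σ a i) i) (hnz a i) with hc
    have hcval : ∀ a i, ((c a i : ℂˣ) : ℂ) = (s a : Matrix (Fin n) (Fin n) ℂ) (σ a i) i :=
      fun a i => rfl
    -- relation between D and the block relation R
    have hDR : ∀ i j : Fin n, D i = D j ↔ ∀ d ∈ Δ, (s d : Matrix (Fin n) (Fin n) ℂ) i i =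
        (s d : Matrix (Fin n) (Fin n) ℂ) j j := by
      intro i j
      constructor
      · intro h d hd
        have := DFunLike.congr_fun h ⟨d, hd⟩
        exact congrArg Units.val this
      · intro h
        apply MonoidHom.ext
        intro d
        exact Units.ext (h (d : Λ) d.2)
    -- matrix identity I1 (commutation relation)
    have I1 : ∀ d a : Λ, ((s d : Matrix (Fin n) (Fin n) ℂ)) * (s a : Matrix (Fin n) (Fin n) ℂ) =
        ((l d a : ℂˣ) : ℂ) • ((s a : Matrix (Fin n) (Fin n) ℂ) * (s d : Matrix (Fin n) (Fin n) ℂ)) := by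
      intro d a
      have hu : (s d * s a : (Matrix (Fin n) (Fin n) ℂ)ˣ) =
          (s d * s a * (s d)⁻¹ * (s a)⁻¹) * (s a * s d) := by group
      have h2 := unit_smul_left (s d * s a * (s d)⁻¹ * (s a)⁻¹) (s a * s d) _ (hcomm d a)
      rw [← hu, Units.val_mul, Units.val_mul] at h2
      exact h2
    -- matrix identity I2 (scalar cocycle)
    choose z hzs using hscal
    have I2 : ∀ a b : Λ, ((s a : Matrix (Fin n) (Fin n) ℂ)) * (s b : Matrix (Fin n) (Fin n) ℂ) =
        ((z a b : ℂˣ) : ℂ) • (s (a * b) : Matrix (Fin n) (Fin n) ℂ) := by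
      intro a b
      have hu : (s a * s b : (Matrix (Fin n) (Fin n) ℂ)ˣ) =
          (s (a * b)) * ((s (a * b))⁻¹ * s a * s b) := by group
      have h2 := unit_smul_right ((s (a * b))⁻¹ * s a * s b) (s (a * b)) _ (hzs a b)
      rw [← hu, Units.val_mul] at h2
      exact h2
    -- core hypothesis hDσ
    have hDσ : ∀ (a : Λ) (i : Fin n), D (σ a i) = D i * μ a := by
      intro a i
      apply MonoidHom.ext
      intro d
      apply Units.ext
      have h2 := congrFun (congrFun (I1 (d : Λ) a) (σ a i)) i
      rw [hrowdiag _ d.2, Matrix.smul_apply, hcoldiag _ d.2, smul_eq_mul] at h2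
      have h3 : (s a : Matrix (Fin n) (Fin n) ℂ) (σ a i) i ≠ 0 := hnz a i
      have h4 : (s (d : Λ) : Matrix (Fin n) (Fin n) ℂ) (σ a i) (σ a i) *
          (s a : Matrix (Fin n) (Fin n) ℂ) (σ a i) i =
          ((l (d : Λ) a : ℂˣ) : ℂ) * (s (d : Λ) : Matrix (Fin n) (Fin n) ℂ) i i *
            (s a : Matrix (Fin n) (Fin n) ℂ) (σ a i) i := by
        rw [h2]; ring
      have h5 := mul_right_cancel₀ h3 h4
      rw [MonoidHom.mul_apply, Units.val_mul, hDval, hDval]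
      show (s ((d : Δ) : Λ) : Matrix (Fin n) (Fin n) ℂ) (σ a i) (σ a i) =
        (s ((d : Δ) : Λ) : Matrix (Fin n) (Fin n) ℂ) i i * ((l ((d : Δ) : Λ) a : ℂˣ) : ℂ)
      rw [h5]
      ring
    -- core hypothesis hcblock
    have hcblock : ∀ (a : Λ) (i j : Fin n), D i = D j → c a i = c a j := by
      intro a i j hij
      apply Units.ext
      rw [hcval, hcval]
      exact hcp a i j ((hDR i j).mp hij)
    -- core hypothesis hσmono
    have hσmono : ∀ (a : Λ) (i j : Fin n), D i = D j → i ≤ j → σ a i ≤ σ a j := by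
      intro a i j hij hle
      exact hmp a i j ((hDR i j).mp hij) hle
    -- core hypothesis hcoc
    have hcoc : ∀ a b : Λ, ∃ w : ℂˣ, ∀ i, σ (a * b) i = σ a (σ b i) ∧
        c (a * b) i * w = c a (σ b i) * c b i := by
      intro a b
      refine ⟨z a b, ?_⟩
      intro i
      have h2 := congrFun (congrFun (I2 a b) (σ a (σ b i))) i
      rw [hcolperm b, Matrix.smul_apply, smul_eq_mul] at h2
      have hlhs : (s a : Matrix (Fin n) (Fin n) ℂ) (σ a (σ b i)) (σ b i) *
          (s b : Matrix (Fin n) (Fin n) ℂ) (σ b i) i ≠ 0 :=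
        mul_ne_zero (hnz a (σ b i)) (hnz b i)
      have hσab : σ (a * b) i = σ a (σ b i) := by
        by_contra hne
        rw [hz (a * b) _ i (Ne.symm hne), mul_zero] at h2
        exact hlhs h2
      constructor
      · exact hσab
      · apply Units.ext
        rw [Units.val_mul, Units.val_mul, hcval, hcval, hcval, hσab]
        linear_combination -h2
    -- core hypothesis hker
    have hanti : ∀ x y : Λ, l y x = (l x y)⁻¹ := by
      intro x y
      have h := hl (x * y)
      simp only [map_mul, MonoidHom.mul_apply, hl x, hl y, one_mul, mul_one] at h
      exact eq_inv_of_mul_eq_one_left h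
    have hker_mem : ∀ a : Λ, (∀ d : Δ, l (d : Λ) a = 1) → a ∈ Δ := by
      intro a ha
      have hiso : IsIsotropic l (Δ ⊔ Subgroup.zpowers a) := by
        intro x hx y hy
        obtain ⟨d, hd, w, hw, rfl⟩ := Subgroup.mem_sup.mp hx
        obtain ⟨k, rfl⟩ := Subgroup.mem_zpowers_iff.mp hw
        obtain ⟨d', hd', w', hw', rfl⟩ := Subgroup.mem_sup.mp hy
        obtain ⟨m, rfl⟩ := Subgroup.mem_zpowers_iff.mp hw'
        have h1 : l d a = 1 := ha ⟨d, hd⟩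
        have h2 : l d' a = 1 := ha ⟨d', hd'⟩
        have h3 : l a d' = 1 := by rw [hanti d' a, h2, inv_one]
        have h4 : l d d' = 1 := hΔ.1 d hd d' hd'
        have h5 : l d (a ^ m) = 1 := by rw [map_zpow (l d) a m, h1, one_zpow]
        have h6 : l (a ^ k) d' = 1 := by
          rw [hanti d' (a ^ k), map_zpow (l d') a k, h2, one_zpow, inv_one]
        have h7 : l (a ^ k) (a ^ m) = 1 := by
          rw [map_zpow (l (a ^ k)) a m, hanti a (a ^ k), map_zpow (l a) a k, hl a,
            one_zpow, inv_one, one_zpow]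
        rw [map_mul l d (a ^ k), MonoidHom.mul_apply, map_mul (l d) d' (a ^ m),
          map_mul (l (a ^ k)) d' (a ^ m), h4, h5, h6, h7]
        simp
      have heq := hΔ.2 _ hiso le_sup_left
      exact heq ▸ Subgroup.mem_sup_right (Subgroup.mem_zpowers a)
    have hker : ∀ a : Λ, μ a = 1 → (∀ i : Fin n, σ a i = i) ∧
        (∀ i j : Fin n, D j = D i * γ.comp Δ.subtype → c a j = γ a * c a i) := by
      intro a ha
      have haΔ : a ∈ Δ := by
        apply hker_mem
        intro d
        have := DFunLike.congr_fun ha d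
        exact (by simpa using this : μ a d = 1)
      refine ⟨hdfix a haΔ, ?_⟩
      intro i j hDj
      apply Units.ext
      rw [Units.val_mul, hcval, hcval, hdfix a haΔ i, hdfix a haΔ j]
      have h2 := DFunLike.congr_fun hDj ⟨a, haΔ⟩
      have h3 := congrArg Units.val h2
      rw [hDval] at h3
      simp only [MonoidHom.mul_apply, Units.val_mul, MonoidHom.comp_apply,
        Subgroup.coe_subtype] at h3
      rw [hDval] at h3
      rw [h3]
      ring
    -- core hypothesis hcount
    have hweight : ∀ i : Fin n, weightSpace Δ s (D i) ≠ ⊥ :=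
      fun i => (weightSpace_ne_bot_iff Δ s hdiag (D i)).mpr ⟨i, fun d => rfl⟩
    have hfilter_eq : ∀ χ : Δ →* ℂˣ,
        (Finset.univ.filter (fun j : Fin n => D j = χ)) =
        (Finset.univ.filter (fun j : Fin n =>
          ∀ d : Δ, (s (d : Λ) : Matrix (Fin n) (Fin n) ℂ) j j = ((χ d : ℂˣ) : ℂ))) := by
      intro χ
      ext j
      simp only [Finset.mem_filter, Finset.mem_univ, true_and]
      constructor
      · intro h d
        rw [← h]
        rfl
      · intro h
        apply MonoidHom.ext
        intro d
        exact Units.ext (h d)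
    have hcount : ∀ i : Fin n,
        (Finset.univ.filter (fun j : Fin n => D j = D i * γ.comp Δ.subtype)).card =
        (Finset.univ.filter (fun j : Fin n => D j = D i)).card := by
      intro i
      obtain ⟨hne, hfr⟩ := hRHS (D i) (hweight i)
      rw [finrank_weightSpace Δ s hdiag, finrank_weightSpace Δ s hdiag] at hfr
      rw [hfilter_eq (D i * γ.comp Δ.subtype), hfilter_eq (D i)]
      exact hfr
    -- apply the core construction
    obtain ⟨τ, ε, hστ, hE2⟩ := core_construction D μ (γ.comp Δ.subtype) γ σ c
      hDσ hcblock hσmono hcoc hker hcount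
    -- build the matrix A
    set Amat : Matrix (Fin n) (Fin n) ℂ :=
      Matrix.of (fun j i : Fin n => if j = τ i then ((ε i : ℂˣ) : ℂ) else 0) with hAmat
    set Bmat : Matrix (Fin n) (Fin n) ℂ :=
      Matrix.of (fun j i : Fin n => if i = τ j then (((ε j)⁻¹ : ℂˣ) : ℂ) else 0) with hBmat
    have hAapp : ∀ j i : Fin n, Amat j i = if j = τ i then ((ε i : ℂˣ) : ℂ) else 0 := fun _ _ => rfl
    have hBapp : ∀ j i : Fin n, Bmat j i = if i = τ j then (((ε j)⁻¹ : ℂˣ) : ℂ) else 0 :=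
      fun _ _ => rfl
    have hAB : Amat * Bmat = 1 := by
      ext j k
      rw [Matrix.mul_apply]
      rw [Finset.sum_eq_single (τ.symm j)]
      · have hj : j = τ (τ.symm j) := (τ.apply_symm_apply j).symm
        rw [hAapp, hBapp, if_pos hj]
        by_cases h : j = k
        · subst h
          rw [if_pos hj, Matrix.one_apply_eq]
          exact Units.mul_inv _
        · rw [if_neg (fun hc : k = τ (τ.symm j) => h (hj.trans hc.symm)), mul_zero,
            Matrix.one_apply_ne h]
      · intro i _ hi
        rw [hAapp, if_neg (fun hc : j = τ i => hi (by rw [hc, Equiv.symm_apply_apply])), zero_mul]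
      · intro hmem; exact absurd (Finset.mem_univ _) hmem
    have hBA : Bmat * Amat = 1 := by
      ext j k
      rw [Matrix.mul_apply]
      rw [Finset.sum_eq_single (τ j)]
      · rw [hBapp, hAapp, if_pos rfl]
        by_cases h : j = k
        · subst h
          rw [if_pos rfl, Matrix.one_apply_eq]
          exact Units.inv_mul _
        · rw [if_neg (fun hc : τ j = τ k => h (τ.injective hc)), mul_zero,
            Matrix.one_apply_ne h]
      · intro i _ hi
        rw [hBapp, if_neg (fun hc : i = τ j => hi hc), zero_mul]
      · intro hmem; exact absurd (Finset.mem_univ _) hmem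
    -- the main intertwining identity
    have hmain : ∀ a : Λ, (s a : Matrix (Fin n) (Fin n) ℂ) * Amat =
        ((γ a : ℂˣ) : ℂ) • (Amat * (s a : Matrix (Fin n) (Fin n) ℂ)) := by
      intro a
      ext j i
      rw [Matrix.smul_apply, hcolperm a Amat j i, smul_eq_mul, Matrix.mul_apply]
      rw [Finset.sum_eq_single (τ i)]
      · simp only [hAapp]
        rw [if_true]
        by_cases hj : j = τ (σ a i)
        · rw [if_pos hj, hj, ← hστ a i]
          have h3 := congrArg Units.val (hE2 a i)
          simp only [Units.val_mul] at h3
          rw [hcval, hcval] at h3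
          linear_combination h3
        · rw [if_neg hj]
          have hjz : (s a : Matrix (Fin n) (Fin n) ℂ) j (τ i) = 0 := by
            apply hz a j (τ i)
            rw [hστ a i]
            exact hj
          rw [hjz]
          ring
      · intro k _ hk
        simp only [hAapp]
        rw [if_neg hk, mul_zero]
      · intro hmem; exact absurd (Finset.mem_univ _) hmem
    -- assemble the unit and conclude
    refine ⟨⟨Amat, Bmat, hAB, hBA⟩, ?_⟩
    intro a
    set Au : (Matrix (Fin n) (Fin n) ℂ)ˣ := ⟨Amat, Bmat, hAB, hBA⟩ with hAu
    have hfin : (Au⁻¹ * s a * Au * (s a)⁻¹ : (Matrix (Fin n) (Fin n) ℂ)ˣ) =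
        Au⁻¹ * ((s a * Au) * (s a)⁻¹) := by group
    rw [hfin, Units.val_mul, Units.val_mul, Units.val_mul]
    have hAuv : (Au : Matrix (Fin n) (Fin n) ℂ) = Amat := rfl
    have hAuinv : ((Au⁻¹ : (Matrix (Fin n) (Fin n) ℂ)ˣ) : Matrix (Fin n) (Fin n) ℂ) = Bmat := rfl
    rw [hAuinv, hAuv, hmain a]
    rw [smul_mul_assoc, mul_smul_comm]
    congr 1
    have hss : ((s a : Matrix (Fin n) (Fin n) ℂ)) *
        (((s a)⁻¹ : (Matrix (Fin n) (Fin n) ℂ)ˣ) : Matrix (Fin n) (Fin n) ℂ) = 1 :=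
      Units.mul_inv _
    rw [mul_assoc Amat, hss, mul_one, hBA]
end

section
/- Let r ≥ 1, let ζ ∈ ℂ be a primitive r-th root of unity, let p₁,…,p_r be natural numbers with p₁+…+p_r = n ≥ 1, and let M ∈ GL(n,ℂ) be the block-diagonal matrix M = diag(I_{p₁}, ζ·I_{p₂}, …, ζ^{r-1}·I_{p_r}). Then there exists A ∈ GL(n,ℂ) with M·A·M⁻¹ = ζ·A if and only if p₁ = p₂ = … = p_r. -/
open Matrix
open Fin.NatCast Fin.CommRing

/-- Let `ζ` be a primitive `r`-th root of unity and
`M = diag(I_{p₁}, ζ I_{p₂}, …, ζ^{r-1} I_{p_r})` (a block-diagonal matrix indexed by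
`Σ k : Fin r, Fin (p k)`, with `p₁ + … + p_r = n ≥ 1`).  Then there exists an invertible
matrix `A` with `M A M⁻¹ = ζ • A` if and only if `p₁ = p₂ = … = p_r`. -/
theorem stmt_13 {r : ℕ} (hr : 1 ≤ r) {ζ : ℂ} (hζ : IsPrimitiveRoot ζ r)
    (p : Fin r → ℕ) (hn : 1 ≤ ∑ k, p k) :
    (∃ A : Matrix (Σ k : Fin r, Fin (p k)) (Σ k : Fin r, Fin (p k)) ℂ,
        IsUnit A ∧
        Matrix.diagonal (fun x : Σ k : Fin r, Fin (p k) => ζ ^ (x.1 : ℕ)) * A *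
            (Matrix.diagonal (fun x : Σ k : Fin r, Fin (p k) => ζ ^ (x.1 : ℕ)))⁻¹ =
          ζ • A) ↔
      ∀ k k' : Fin r, p k = p k' := by
  haveI : NeZero r := ⟨by omega⟩
  have hζr : ζ ^ r = 1 := hζ.pow_eq_one
  have hζ0 : ζ ≠ 0 := by
    intro h; rw [h, zero_pow (by omega)] at hζr; exact one_ne_zero hζr.symm
  have hpow0 : ∀ m : ℕ, ζ ^ m ≠ 0 := fun m => pow_ne_zero m hζ0
  -- ζ ^ ((w+1).val) = ζ ^ w.val * ζ
  have pe : ∀ w : Fin r, ζ ^ (((w + 1 : Fin r)) : ℕ) = ζ ^ (w : ℕ) * ζ := by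
    intro w
    have h1 : ((w + 1 : Fin r) : ℕ) = ((w : ℕ) + 1) % r := by
      simp [Fin.add_def]
    rw [h1, ← pow_eq_pow_mod _ hζr, pow_succ]
  have hiff : ∀ A : Matrix (Σ k : Fin r, Fin (p k)) (Σ k : Fin r, Fin (p k)) ℂ,
      (Matrix.diagonal (fun x : Σ k : Fin r, Fin (p k) => ζ ^ (x.1 : ℕ)) * A *
            (Matrix.diagonal (fun x : Σ k : Fin r, Fin (p k) => ζ ^ (x.1 : ℕ)))⁻¹ =
          ζ • A) ↔ ∀ x y : Σ k : Fin r, Fin (p k), A x y ≠ 0 → x.1 = y.1 + 1 := by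
    intro A
    have hdinv : (Matrix.diagonal (fun x : Σ k : Fin r, Fin (p k) => ζ ^ (x.1 : ℕ)))⁻¹
        = Matrix.diagonal (fun x : Σ k : Fin r, Fin (p k) => (ζ ^ (x.1 : ℕ))⁻¹) :=
      Matrix.inv_eq_right_inv (by
        rw [Matrix.diagonal_mul_diagonal]
        convert Matrix.diagonal_one
        exact mul_inv_cancel₀ (hpow0 _))
    rw [hdinv]
    constructor
    · intro hEq x y hxy
      have h := congrFun (congrFun hEq x) y
      simp only [Matrix.mul_diagonal, Matrix.diagonal_mul,
        Matrix.smul_apply, smul_eq_mul] at h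
      -- h : ζ ^ x.1 * A x y * (ζ ^ y.1)⁻¹ = ζ * A x y
      have hpows : ζ ^ (x.1 : ℕ) = ζ ^ ((y.1 + 1 : Fin r) : ℕ) := by
        rw [pe]
        field_simp at h
        exact h
      have := hζ.pow_inj x.1.isLt (y.1 + 1).isLt hpows
      exact Fin.ext this
    · intro hsupp
      ext x y
      simp only [Matrix.mul_diagonal, Matrix.diagonal_mul,
        Matrix.smul_apply, smul_eq_mul]
      by_cases hxy : A x y = 0
      · rw [hxy]; ring
      · have h1 : x.1 = y.1 + 1 := hsupp x y hxy
        rw [h1, pe]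
        field_simp
  constructor
  · rintro ⟨A, hA, hEq⟩
    have hsupp := (hiff A).mp hEq
    haveI := hA.invertible
    have hinj : Function.Injective A.mulVec := A.mulVec_injective_of_invertible
    have step : ∀ k : Fin r, p k ≤ p (k + 1) := by
      intro k
      set C : Matrix (Fin (p (k+1))) (Fin (p k)) ℂ :=
        Matrix.of (fun i j => A ⟨k+1, i⟩ ⟨k, j⟩) with hC
      have hCinj : Function.Injective C.mulVecLin := by
        rw [injective_iff_map_eq_zero]
        intro w hw
        set v : (Σ k : Fin r, Fin (p k)) → ℂ :=
          fun x => if h : x.1 = k then w (Fin.cast (congrArg p h) x.2) else 0 with hvdef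
        have hv : A.mulVec v = 0 := by
          funext x
          have hsum : A.mulVec v x = ∑ j, A x ⟨k, j⟩ * w j := by
            simp only [Matrix.mulVec, dotProduct]
            rw [← Finset.univ_sigma_univ, Finset.sum_sigma]
            rw [Finset.sum_eq_single_of_mem k (Finset.mem_univ k)]
            · apply Finset.sum_congr rfl
              intro j _
              simp [hvdef]
            · intro k' _ hk'
              apply Finset.sum_eq_zero
              intro j _
              simp [hvdef, hk']
          rw [hsum]
          by_cases hx : x.1 = k + 1
          · obtain ⟨x1, x2⟩ := x
            dsimp at hx
            subst hx
            have hz := congrFun hw x2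
            simpa [hC, Matrix.mulVec, dotProduct] using hz
          · simp only [Pi.zero_apply]
            apply Finset.sum_eq_zero
            intro j _
            by_contra h0
            have hA0 : A x ⟨k, j⟩ ≠ 0 := fun hh => h0 (by rw [hh, zero_mul])
            exact hx (hsupp x ⟨k, j⟩ hA0)
        have hv0 : v = 0 := hinj (by rw [hv, Matrix.mulVec_zero])
        funext j
        have := congrFun hv0 ⟨k, j⟩
        simpa [hvdef] using this
      have hle := LinearMap.finrank_le_finrank_of_injective hCinj
      simpa using hle
    have mono : ∀ (m : ℕ) (k : Fin r), p k ≤ p (k + (m : Fin r)) := by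
      intro m
      induction m with
      | zero => simp
      | succ m ih =>
        intro k
        have h2 : (((m+1 : ℕ)) : Fin r) = ((m : ℕ) : Fin r) + 1 := by push_cast; ring
        rw [h2, ← add_assoc]
        exact le_trans (ih k) (step (k + (m : Fin r)))
    intro k k'
    have e1 : k + (((k' - k : Fin r) : ℕ) : Fin r) = k' := by
      rw [Fin.cast_val_eq_self]; ring
    have e2 : k' + (((k - k' : Fin r) : ℕ) : Fin r) = k := by
      rw [Fin.cast_val_eq_self]; ring
    have h1 := mono ((k' - k : Fin r) : ℕ) k
    have h2 := mono ((k - k' : Fin r) : ℕ) k'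
    rw [e1] at h1
    rw [e2] at h2
    omega
  · intro hp
    let σ : Equiv.Perm (Σ k : Fin r, Fin (p k)) :=
      Equiv.sigmaCongr (Equiv.subRight (1 : Fin r)) (fun k => finCongr (hp k (k - 1)))
    have hσ1 : ∀ x : Σ k : Fin r, Fin (p k), (σ x).1 = x.1 - 1 := by
      rintro ⟨x1, x2⟩
      rfl
    refine ⟨σ.permMatrix ℂ, ?_, (hiff _).mpr ?_⟩
    · rw [Matrix.isUnit_iff_isUnit_det, Matrix.det_permutation]
      rcases Int.units_eq_one_or (Equiv.Perm.sign σ) with h | h <;> simp [h]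
    · intro x y hxy
      have hσx : σ x = y := by
        by_contra hne
        apply hxy
        simp [Equiv.Perm.permMatrix, PEquiv.toMatrix_apply, Equiv.toPEquiv_apply, hne]
      have : y.1 = x.1 - 1 := by rw [← hσx, hσ1]
      rw [this]
      ring
end

section
/- Let r ≥ 1, m ≥ 1, n = r·m, let ζ ∈ ℂ be a primitive r-th root of unity, let M = diag(I_m, ζ·I_m, …, ζ^{r-1}·I_m) ∈ GL(n,ℂ), and let S ∈ GL(n,ℂ) be the block cyclic permutation matrix with r×r block structure whose (i, i+1 mod r) blocks equal I_m and all other blocks are zero. Then for every A ∈ GL(n,ℂ) and every integer k: M·A·M⁻¹ = ζ^k·A if and only if A·S^k is block diagonal (i.e. A·S^k preserves each of the r coordinate blocks of ℂⁿ). In particular the group {A ∈ GL(n,ℂ) : M·A·M⁻¹·A⁻¹ is a scalar matrix} is generated by the block-diagonal subgroup GL(m,ℂ)^r and S. -/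
open Fin.CommRing

section Aux

variable {r : ℕ} [NeZero r]

private lemma fin_eq_iff_dvd (a b : Fin r) (k : ℤ) :
    a = b + (k : Fin r) ↔ (r : ℤ) ∣ ((a : ℤ) - ((b : ℤ) + k)) := by
  rw [← CharP.intCast_eq_zero_iff (Fin r) r]
  push_cast [Fin.cast_val_eq_self]
  rw [sub_eq_zero]

private lemma zpow_eq_zpow_iff {ζ : ℂ} (hζ : IsPrimitiveRoot ζ r) (s t : ℤ) :
    ζ ^ s = ζ ^ t ↔ (r : ℤ) ∣ (s - t) := by
  have hζ0 : ζ ≠ 0 := hζ.ne_zero (NeZero.ne r)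
  rw [← hζ.zpow_eq_one_iff_dvd, zpow_sub₀ hζ0,
    div_eq_one_iff_eq (zpow_ne_zero _ hζ0)]

private lemma fin_key {ζ : ℂ} (hζ : IsPrimitiveRoot ζ r) (a b : Fin r) (k : ℤ) :
    a = b + (k : Fin r) ↔ ζ ^ (a : ℤ) = ζ ^ ((b : ℤ) + k) := by
  rw [fin_eq_iff_dvd, zpow_eq_zpow_iff hζ]

private lemma permMatrix_mul' {n : Type*} [Fintype n] [DecidableEq n]
    (τ ρ : Equiv.Perm n) :
    (τ.permMatrix ℂ) * (ρ.permMatrix ℂ) = ((ρ * τ).permMatrix ℂ) := by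
  show _ = (τ.trans ρ).toPEquiv.toMatrix
  rw [Equiv.toPEquiv_trans, PEquiv.toMatrix_trans]

private lemma permMatrix_one' {n : Type*} [Fintype n] [DecidableEq n] :
    ((1 : Equiv.Perm n).permMatrix ℂ) = 1 := by
  show (Equiv.refl n).toPEquiv.toMatrix = 1
  rw [Equiv.toPEquiv_refl, PEquiv.toMatrix_refl]

end Aux

/-- Let `n = r·m`, `ζ` a primitive `r`-th root of unity,
`M = diag(I_m, ζ I_m, …, ζ^{r-1} I_m)` and `S` the block cyclic permutation matrix
(`(Sv)_i = v_{i+1 mod r}` on the `r` blocks `ℂ^m`), all indexed by `Fin r × Fin m`.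
Then `S` is invertible and for every invertible `A` and every integer `k`:
`M A M⁻¹ = ζ^k • A` if and only if `A · S^k` is block diagonal.  In particular the group
`{A ∈ GL(n,ℂ) : M A M⁻¹ A⁻¹ is scalar}` is generated by the block-diagonal subgroup
`GL(m,ℂ)^r` together with `S`. -/
theorem stmt_14 {r m : ℕ} [NeZero r] (hm : 1 ≤ m) {ζ : ℂ} (hζ : IsPrimitiveRoot ζ r) :
    let ι := Fin r × Fin m
    let M : Matrix ι ι ℂ := Matrix.diagonal (fun x : ι => ζ ^ (x.1 : ℕ))
    let S : Matrix ι ι ℂ :=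
      Matrix.of (fun x y : ι => if y.1 = x.1 + 1 ∧ x.2 = y.2 then (1 : ℂ) else 0)
    ∃ Su : (Matrix ι ι ℂ)ˣ, (Su : Matrix ι ι ℂ) = S ∧
      (∀ A : Matrix ι ι ℂ, IsUnit A → ∀ k : ℤ,
        (M * A * M⁻¹ = ζ ^ k • A ↔
          ∀ x y : ι, x.1 ≠ y.1 → (A * ((Su ^ k : (Matrix ι ι ℂ)ˣ) : Matrix ι ι ℂ)) x y = 0)) ∧
      (∀ A : (Matrix ι ι ℂ)ˣ,
        (∃ z : ℂ, M * (A : Matrix ι ι ℂ) * M⁻¹ * ((A⁻¹ : (Matrix ι ι ℂ)ˣ) : Matrix ι ι ℂ) =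
            z • (1 : Matrix ι ι ℂ)) ↔
          A ∈ Subgroup.closure
            ({B : (Matrix ι ι ℂ)ˣ |
                ∀ x y : ι, x.1 ≠ y.1 → (B : Matrix ι ι ℂ) x y = 0} ∪ {Su})) := by
  intro ι M S
  classical
  have hζ0 : ζ ≠ 0 := hζ.ne_zero (NeZero.ne r)
  -- inverse of M
  set Minv : Matrix ι ι ℂ := Matrix.diagonal (fun x : ι => (ζ ^ (x.1 : ℕ))⁻¹) with hMinvdef
  have hMM : M * Minv = 1 := by
    show Matrix.diagonal _ * Matrix.diagonal _ = _
    rw [Matrix.diagonal_mul_diagonal]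
    have h : (fun i : ι => ζ ^ (i.1 : ℕ) * (ζ ^ (i.1 : ℕ))⁻¹) = fun _ => (1 : ℂ) := by
      funext i; exact mul_inv_cancel₀ (pow_ne_zero _ hζ0)
    rw [h, Matrix.diagonal_one]
  have hMM' : Minv * M = 1 := by
    show Matrix.diagonal _ * Matrix.diagonal _ = _
    rw [Matrix.diagonal_mul_diagonal]
    have h : (fun i : ι => (ζ ^ (i.1 : ℕ))⁻¹ * ζ ^ (i.1 : ℕ)) = fun _ => (1 : ℂ) := by
      funext i; exact inv_mul_cancel₀ (pow_ne_zero _ hζ0)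
    rw [h, Matrix.diagonal_one]
  have hMinv : M⁻¹ = Minv := Matrix.inv_eq_right_inv hMM
  have cancelMinvM : ∀ X : Matrix ι ι ℂ, Minv * (M * X) = X := fun X => by
    rw [← mul_assoc, hMM', one_mul]
  -- the permutation
  set σ : Equiv.Perm ι := (Equiv.addRight (1 : Fin r)).prodCongr (Equiv.refl (Fin m))
    with hσdef
  have hσapp : ∀ x : ι, σ x = (x.1 + 1, x.2) := fun x => rfl
  have hS : S = σ.permMatrix ℂ := by
    ext x y
    simp only [S, Matrix.of_apply, Equiv.Perm.permMatrix, PEquiv.toMatrix_apply,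
      Equiv.toPEquiv_apply, Option.mem_some_iff, hσapp]
    by_cases h : y = (x.1 + 1, x.2)
    · rw [if_pos ⟨congrArg Prod.fst h, (congrArg Prod.snd h).symm⟩, if_pos h.symm]
    · rw [if_neg fun hc => h (Prod.ext hc.1 hc.2.symm), if_neg fun hc => h hc.symm]
  -- the unit S
  have hmulinv : σ.permMatrix ℂ * σ⁻¹.permMatrix ℂ = 1 := by
    rw [permMatrix_mul', inv_mul_cancel, permMatrix_one']
  have hmulinv' : σ⁻¹.permMatrix ℂ * σ.permMatrix ℂ = 1 := by
    rw [permMatrix_mul', mul_inv_cancel, permMatrix_one']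
  refine ⟨⟨σ.permMatrix ℂ, σ⁻¹.permMatrix ℂ, hmulinv, hmulinv'⟩, hS.symm, ?_⟩
  set Su : (Matrix ι ι ℂ)ˣ := ⟨σ.permMatrix ℂ, σ⁻¹.permMatrix ℂ, hmulinv, hmulinv'⟩
    with hSudef
  -- powers of Su
  have hnatgen : ∀ (u : (Matrix ι ι ℂ)ˣ) (τ : Equiv.Perm ι),
      (u : Matrix ι ι ℂ) = τ.permMatrix ℂ →
      ∀ k : ℕ, ((u ^ k : (Matrix ι ι ℂ)ˣ) : Matrix ι ι ℂ) = (τ ^ k).permMatrix ℂ := by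
    intro u τ hu k
    induction k with
    | zero => simp [permMatrix_one']
    | succ k ih =>
      rw [pow_succ, Units.val_mul, ih, hu, permMatrix_mul', ← pow_succ']
  have hSu_zpow : ∀ k : ℤ,
      ((Su ^ k : (Matrix ι ι ℂ)ˣ) : Matrix ι ι ℂ) = (σ ^ k).permMatrix ℂ := by
    intro k
    cases k with
    | ofNat k =>
      simpa using hnatgen Su σ rfl k
    | negSucc k =>
      rw [zpow_negSucc, ← inv_pow, hnatgen Su⁻¹ σ⁻¹ rfl (k + 1), inv_pow, ← zpow_negSucc]
  -- formula for σ ^ k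
  have hσinv : ∀ x : ι, σ⁻¹ x = (x.1 - 1, x.2) := by
    intro x
    have h : σ ((x.1 - 1 : Fin r), x.2) = x := Prod.ext (show x.1 - 1 + 1 = x.1 from sub_add_cancel _ _) rfl
    conv_lhs => rw [← h]
    exact Equiv.symm_apply_apply σ _
  have hσ_zpow : ∀ (k : ℤ) (x : ι), (σ ^ k) x = (x.1 + (k : Fin r), x.2) := by
    intro k
    induction k using Int.induction_on with
    | zero => intro x; simp
    | succ k ih =>
      intro x
      rw [zpow_add_one, Equiv.Perm.mul_apply, ih, hσapp]
      refine Prod.ext ?_ rfl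
      show x.1 + 1 + ((k : ℤ) : Fin r) = x.1 + ((k + 1 : ℤ) : Fin r)
      push_cast
      ring
    | pred k ih =>
      intro x
      rw [zpow_sub_one, Equiv.Perm.mul_apply, hσinv, ih]
      refine Prod.ext ?_ rfl
      show x.1 - 1 + ((-k : ℤ) : Fin r) = x.1 + ((-k - 1 : ℤ) : Fin r)
      push_cast
      ring
  -- entries of A * Su^k
  have hAS : ∀ (A : Matrix ι ι ℂ) (k : ℤ) (x y : ι),
      (A * ((Su ^ k : (Matrix ι ι ℂ)ˣ) : Matrix ι ι ℂ)) x y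
        = A x (y.1 + ((-k : ℤ) : Fin r), y.2) := by
    intro A k x y
    rw [hSu_zpow, PEquiv.mul_toMatrix_toPEquiv]
    have hsymm : (σ ^ k).symm y = (σ ^ (-k)) y := by
      rw [zpow_neg]; rfl
    simp only [Matrix.submatrix_apply, id_eq, hsymm, hσ_zpow]
  -- entry formula for M * A * Minv
  have hMAM : ∀ (A : Matrix ι ι ℂ) (x y : ι),
      (M * A * Minv) x y = ζ ^ (x.1 : ℕ) * A x y * (ζ ^ (y.1 : ℕ))⁻¹ := by
    intro A x y
    rw [Matrix.mul_diagonal, Matrix.diagonal_mul]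
  -- relation between pow and zpow form
  have hpowz : ∀ (a : Fin r) (k : ℤ), ζ ^ ((a : ℤ) + k) = ζ ^ (a : ℕ) * ζ ^ k := by
    intro a k
    rw [zpow_add₀ hζ0, zpow_natCast]
  -- the main entry condition
  have hcond_iff : ∀ (A : Matrix ι ι ℂ) (k : ℤ),
      (M * A * M⁻¹ = ζ ^ k • A) ↔
        (∀ x y : ι, A x y ≠ 0 → x.1 = y.1 + (k : Fin r)) := by
    intro A k
    rw [hMinv]
    constructor
    · intro h x y hne
      have e := congrFun (congrFun h x) y
      rw [hMAM, Matrix.smul_apply, smul_eq_mul] at e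
      have e2 : (ζ ^ (x.1 : ℕ) * (ζ ^ (y.1 : ℕ))⁻¹) * A x y = ζ ^ k * A x y := by
        rw [← e]; ring
      have e3 := mul_right_cancel₀ hne e2
      rw [fin_key hζ, hpowz, zpow_natCast]
      rw [← e3]
      field_simp
    · intro h
      ext x y
      rw [hMAM, Matrix.smul_apply, smul_eq_mul]
      by_cases hA0 : A x y = 0
      · simp [hA0]
      · have h2 := (fin_key hζ x.1 y.1 k).mp (h x y hA0)
        rw [hpowz, zpow_natCast] at h2
        rw [h2]
        field_simp
    -- end hcond_iff
  have hblock_iff : ∀ (A : Matrix ι ι ℂ) (k : ℤ),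
      (∀ x y : ι, x.1 ≠ y.1 → (A * ((Su ^ k : (Matrix ι ι ℂ)ˣ) : Matrix ι ι ℂ)) x y = 0) ↔
        (∀ x y : ι, A x y ≠ 0 → x.1 = y.1 + (k : Fin r)) := by
    intro A k
    constructor
    · intro h x z hz
      by_contra hne
      apply hz
      have h1 : x.1 ≠ z.1 + (k : Fin r) := hne
      have := h x (z.1 + (k : Fin r), z.2) h1
      rw [hAS] at this
      convert this using 3
      · push_cast
        ring
    · intro h x y hne
      rw [hAS]
      by_contra hne2
      have := h _ _ hne2
      apply hne
      rw [this]
      push_cast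
      ring
  have hpart1 : ∀ A : Matrix ι ι ℂ, IsUnit A → ∀ k : ℤ,
      (M * A * M⁻¹ = ζ ^ k • A ↔
        ∀ x y : ι, x.1 ≠ y.1 →
          (A * ((Su ^ k : (Matrix ι ι ℂ)ˣ) : Matrix ι ι ℂ)) x y = 0) := by
    intro A _ k
    rw [hcond_iff, hblock_iff]
  refine ⟨hpart1, ?_⟩
  -- part 2
  intro A
  constructor
  · rintro ⟨z, hz⟩
    rw [hMinv] at hz
    have h1 : M * (A : Matrix ι ι ℂ) * Minv = z • (A : Matrix ι ι ℂ) := by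
      have : M * (A : Matrix ι ι ℂ) * Minv
          = (M * (A : Matrix ι ι ℂ) * Minv * ((A⁻¹ : (Matrix ι ι ℂ)ˣ) : Matrix ι ι ℂ))
            * (A : Matrix ι ι ℂ) := by
        rw [mul_assoc, mul_assoc, mul_assoc]
        have : ((A⁻¹ : (Matrix ι ι ℂ)ˣ) : Matrix ι ι ℂ) * (A : Matrix ι ι ℂ) = 1 :=
          Units.inv_mul A
        rw [this, mul_one]
      rw [this, hz, smul_mul_assoc, one_mul]
    -- find a nonzero entry
    have hne : ∃ x y : ι, (A : Matrix ι ι ℂ) x y ≠ 0 := by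
      by_contra hc
      push_neg at hc
      have hA0 : (A : Matrix ι ι ℂ) = 0 := by ext x y; exact hc x y
      have h1' : (A : Matrix ι ι ℂ) * ((A⁻¹ : (Matrix ι ι ℂ)ˣ) : Matrix ι ι ℂ) = 1 :=
        Units.mul_inv A
      rw [hA0, zero_mul] at h1'
      have x0 : ι := (⟨0, Nat.pos_of_ne_zero (NeZero.ne r)⟩, ⟨0, hm⟩)
      have := congrFun (congrFun h1' x0) x0
      simp [Matrix.one_apply] at this
    obtain ⟨x, y, hxy⟩ := hne
    have e := congrFun (congrFun h1 x) y
    rw [hMAM, Matrix.smul_apply, smul_eq_mul] at e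
    have e2 : (ζ ^ (x.1 : ℕ) * (ζ ^ (y.1 : ℕ))⁻¹) * (A : Matrix ι ι ℂ) x y
        = z * (A : Matrix ι ι ℂ) x y := by rw [← e]; ring
    have e3 := mul_right_cancel₀ hxy e2
    set k : ℤ := (x.1 : ℤ) - (y.1 : ℤ) with hk
    have hzk : z = ζ ^ k := by
      rw [← e3, hk, zpow_sub₀ hζ0, zpow_natCast, zpow_natCast, div_eq_mul_inv]
    have h1' : M * (A : Matrix ι ι ℂ) * M⁻¹ = ζ ^ k • (A : Matrix ι ι ℂ) := by
      rw [hMinv, h1, hzk]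
    have hbd := (hpart1 (A : Matrix ι ι ℂ) A.isUnit k).mp h1'
    -- A = (A * Su^k) * (Su^k)⁻¹
    have hSumem : Su ∈ Subgroup.closure
        ({B : (Matrix ι ι ℂ)ˣ |
            ∀ x y : ι, x.1 ≠ y.1 → (B : Matrix ι ι ℂ) x y = 0} ∪ {Su}) :=
      Subgroup.subset_closure (Or.inr rfl)
    have hBmem : A * Su ^ k ∈ Subgroup.closure
        ({B : (Matrix ι ι ℂ)ˣ |
            ∀ x y : ι, x.1 ≠ y.1 → (B : Matrix ι ι ℂ) x y = 0} ∪ {Su}) := by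
      apply Subgroup.subset_closure
      left
      intro x y hne
      rw [Units.val_mul]
      exact hbd x y hne
    have : A = (A * Su ^ k) * (Su ^ k)⁻¹ := by group
    rw [this]
    exact mul_mem hBmem (inv_mem (zpow_mem hSumem k))
  · intro hA
    have hp : ∃ k : ℤ, M * (A : Matrix ι ι ℂ) * M⁻¹ = ζ ^ k • (A : Matrix ι ι ℂ) := by
      induction hA using Subgroup.closure_induction with
      | mem B hB =>
        rcases hB with hB | hB
        · refine ⟨0, ?_⟩
          have hcomm : M * (B : Matrix ι ι ℂ) = (B : Matrix ι ι ℂ) * M := by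
            ext x y
            rw [Matrix.diagonal_mul, Matrix.mul_diagonal]
            by_cases h : x.1 = y.1
            · rw [h]; ring
            · rw [hB x y h]; ring
          rw [hMinv, hcomm, mul_assoc, hMM, mul_one, zpow_zero, one_smul]
        · refine ⟨-1, ?_⟩
          rw [Set.mem_singleton_iff] at hB
          subst hB
          have hcomm : M * (Su : Matrix ι ι ℂ)
              = ζ ^ (-1 : ℤ) • ((Su : Matrix ι ι ℂ) * M) := by
            ext x y
            show (M * σ.permMatrix ℂ) x y = _
            rw [Matrix.diagonal_mul, Matrix.smul_apply]
            show _ = ζ ^ (-1 : ℤ) * ((σ.permMatrix ℂ * M) x y)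
            rw [Matrix.mul_diagonal]
            show ζ ^ (x.1 : ℕ) * (σ.toPEquiv.toMatrix : Matrix ι ι ℂ) x y
              = ζ ^ (-1 : ℤ) * ((σ.toPEquiv.toMatrix : Matrix ι ι ℂ) x y * ζ ^ (y.1 : ℕ))
            rw [PEquiv.toMatrix_apply, Equiv.toPEquiv_apply]
            simp only [Option.mem_some_iff]
            by_cases h : y = σ x
            · subst h
              rw [if_pos rfl]
              have h1 : (σ x).1 = x.1 + ((1 : ℤ) : Fin r) := by
                rw [hσapp]; push_cast; ring
              have h2 : ζ ^ (((σ x).1 : Fin r) : ℤ) = ζ ^ ((x.1 : ℤ) + 1) :=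
                (fin_key hζ _ _ 1).mp h1
              rw [zpow_add₀ hζ0] at h2
              rw [← zpow_natCast ζ ((σ x).1 : ℕ), ← zpow_natCast ζ (x.1 : ℕ)]
              rw [h2]
              rw [zpow_one]
              rw [zpow_neg, zpow_one]
              field_simp
            · rw [if_neg fun hc => h hc.symm]
              ring
          rw [hMinv, hcomm, smul_mul_assoc, mul_assoc, hMM, mul_one]
      | one =>
        refine ⟨0, ?_⟩
        rw [hMinv, Units.val_one, mul_one, hMM, zpow_zero, one_smul]
      | mul B C hB hC ihB ihC =>
        obtain ⟨k1, h1⟩ := ihB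
        obtain ⟨k2, h2⟩ := ihC
        refine ⟨k1 + k2, ?_⟩
        rw [hMinv] at h1 h2 ⊢
        have e : M * ((B * C : (Matrix ι ι ℂ)ˣ) : Matrix ι ι ℂ) * Minv
            = (M * (B : Matrix ι ι ℂ) * Minv) * (M * (C : Matrix ι ι ℂ) * Minv) := by
          rw [Units.val_mul]
          simp only [mul_assoc, cancelMinvM]
        rw [e, h1, h2, smul_mul_assoc, mul_smul_comm, smul_smul, ← zpow_add₀ hζ0, ← Units.val_mul]
      | inv B hB ihB =>
        obtain ⟨k, h⟩ := ihB
        refine ⟨-k, ?_⟩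
        rw [hMinv] at h ⊢
        have huv : ((B : Matrix ι ι ℂ)) * ((B⁻¹ : (Matrix ι ι ℂ)ˣ) : Matrix ι ι ℂ) = 1 :=
          Units.mul_inv B
        have hvu : ((B⁻¹ : (Matrix ι ι ℂ)ˣ) : Matrix ι ι ℂ) * (B : Matrix ι ι ℂ) = 1 :=
          Units.inv_mul B
        have hXinv : (ζ ^ k • (B : Matrix ι ι ℂ))
            * (M * ((B⁻¹ : (Matrix ι ι ℂ)ˣ) : Matrix ι ι ℂ) * Minv) = 1 := by
          rw [← h]
          calc M * (B : Matrix ι ι ℂ) * Minv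
              * (M * ((B⁻¹ : (Matrix ι ι ℂ)ˣ) : Matrix ι ι ℂ) * Minv)
              = M * ((B : Matrix ι ι ℂ)
                * ((B⁻¹ : (Matrix ι ι ℂ)ˣ) : Matrix ι ι ℂ) * Minv) := by
                simp only [mul_assoc, cancelMinvM]
            _ = 1 := by rw [huv, one_mul, hMM]
        have hYu : (ζ ^ (-k : ℤ) • ((B⁻¹ : (Matrix ι ι ℂ)ˣ) : Matrix ι ι ℂ))
            * (ζ ^ k • (B : Matrix ι ι ℂ)) = 1 := by
          rw [smul_mul_assoc, mul_smul_comm, smul_smul, ← zpow_add₀ hζ0, neg_add_cancel,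
            zpow_zero, hvu, one_smul]
        calc M * ((B⁻¹ : (Matrix ι ι ℂ)ˣ) : Matrix ι ι ℂ) * Minv
            = 1 * (M * ((B⁻¹ : (Matrix ι ι ℂ)ˣ) : Matrix ι ι ℂ) * Minv) := by
              rw [one_mul]
          _ = (ζ ^ (-k : ℤ) • ((B⁻¹ : (Matrix ι ι ℂ)ˣ) : Matrix ι ι ℂ))
              * ((ζ ^ k • (B : Matrix ι ι ℂ))
                * (M * ((B⁻¹ : (Matrix ι ι ℂ)ˣ) : Matrix ι ι ℂ) * Minv)) := by
              rw [← hYu, mul_assoc]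
          _ = ζ ^ (-k : ℤ) • ((B⁻¹ : (Matrix ι ι ℂ)ˣ) : Matrix ι ι ℂ) := by
              rw [hXinv, mul_one]
    obtain ⟨k, h⟩ := hp
    exact ⟨ζ ^ k, by rw [h, smul_mul_assoc, Units.mul_inv]⟩
end

section
/- Let n ≥ 1 and let Sp(2n,ℂ) denote the complex symplectic group of 2n×2n matrices P with P·J·Pᵀ = J, where J = fromBlocks 0 Iₙ (−Iₙ) 0. Let S := fromBlocks (i·Iₙ) 0 0 (−i·Iₙ), where i is the imaginary unit. Then S ∈ Sp(2n,ℂ), J ∈ Sp(2n,ℂ), and S is conjugate to J within the symplectic group: there exists P ∈ Sp(2n,ℂ) with P·S·P⁻¹ = J. -/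
open Matrix Complex

/-- In the symplectic group `Sp(2n,ℂ)` (Mathlib's
`Matrix.symplecticGroup (Fin n) ℂ`, matrices `P` with `P J Pᵀ = J`), the matrices
`J' = fromBlocks 0 Iₙ (−Iₙ) 0` and `S = fromBlocks (i Iₙ) 0 0 (−i Iₙ)` both belong to the
group, and `S` is conjugate to `J'` within the group: there is `P ∈ Sp(2n,ℂ)` with
`P S P⁻¹ = J'`. -/
theorem stmt_15 {n : ℕ} (hn : 1 ≤ n) :
    let J' : Matrix (Fin n ⊕ Fin n) (Fin n ⊕ Fin n) ℂ := Matrix.fromBlocks 0 1 (-1) 0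
    let S : Matrix (Fin n ⊕ Fin n) (Fin n ⊕ Fin n) ℂ :=
      Matrix.fromBlocks (Complex.I • 1) 0 0 ((-Complex.I) • 1)
    S ∈ Matrix.symplecticGroup (Fin n) ℂ ∧
      J' ∈ Matrix.symplecticGroup (Fin n) ℂ ∧
      ∃ P ∈ Matrix.symplecticGroup (Fin n) ℂ, P * S * P⁻¹ = J' := by
  intro J' S
  have hJ' : J' = -Matrix.J (Fin n) ℂ := by
    simp [Matrix.J, J', Matrix.fromBlocks_neg]
  have hS : S ∈ Matrix.symplecticGroup (Fin n) ℂ := by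
    rw [SymplecticGroup.mem_iff]
    simp [Matrix.J, S, Matrix.fromBlocks_multiply, Matrix.fromBlocks_transpose,
      smul_smul, Matrix.transpose_smul]
  refine ⟨hS, hJ' ▸ SymplecticGroup.neg_mem (SymplecticGroup.J_mem _ _), ?_⟩
  set P : Matrix (Fin n ⊕ Fin n) (Fin n ⊕ Fin n) ℂ :=
    Matrix.fromBlocks 1 ((Complex.I / 2) • 1) (Complex.I • 1) ((1 / 2 : ℂ) • 1) with hPdef
  have hP : P ∈ Matrix.symplecticGroup (Fin n) ℂ := by
    rw [SymplecticGroup.mem_iff]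
    simp [Matrix.J, hPdef, Matrix.fromBlocks_multiply, Matrix.fromBlocks_transpose,
      smul_smul, Matrix.transpose_smul]
    refine ⟨?_, ?_, ?_⟩
    · rw [← neg_smul, ← add_smul,
        show Complex.I * (Complex.I / 2) + -(2⁻¹ : ℂ) = -1 by
          linear_combination (1 / 2 : ℂ) * Complex.I_mul_I,
        neg_smul, one_smul]
    · rw [← neg_smul, ← add_smul,
        show (2⁻¹ : ℂ) + -(Complex.I / 2 * Complex.I) = 1 by
          linear_combination (-1 / 2 : ℂ) * Complex.I_mul_I,
        one_smul]
    · rw [← neg_smul, ← add_smul,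
        show Complex.I * (2⁻¹ : ℂ) + -((2⁻¹ : ℂ) * Complex.I) = 0 by ring, zero_smul]
  refine ⟨P, hP, ?_⟩
  have hcomm : P * S = J' * P := by
    simp [hPdef, S, J', Matrix.fromBlocks_multiply, smul_smul]
    constructor
    · rw [← neg_smul,
        show -(Complex.I * (Complex.I / 2)) = (2⁻¹ : ℂ) by
          linear_combination (-1 / 2 : ℂ) * Complex.I_mul_I]
    · rw [show Complex.I * (2⁻¹ : ℂ) = Complex.I / 2 by ring]
  have hunit : IsUnit P.det := SymplecticGroup.symplectic_det hP
  rw [hcomm, mul_assoc, Matrix.mul_nonsing_inv P hunit, mul_one]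
end

section
/- Let n ≥ 1, let Sp(2n,ℂ) be the symplectic group {P : P·J·Pᵀ = J} with J = fromBlocks 0 Iₙ (−Iₙ) 0, and let S := fromBlocks (i·Iₙ) 0 0 (−i·Iₙ). Then for every M ∈ Sp(2n,ℂ): M commutes with S (equivalently S·M·S⁻¹ = M) if and only if there exists A ∈ GL(n,ℂ) such that M = fromBlocks A 0 0 ((Aᵀ)⁻¹). In particular the fixed-point subgroup Sp(2n,ℂ)^{Int_S} is isomorphic to GL(n,ℂ). -/
open Matrix

/-- Let `S = fromBlocks (i Iₙ) 0 0 (−i Iₙ)`.  A symplectic matrix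
`M ∈ Sp(2n,ℂ)` commutes with `S` if and only if `M = fromBlocks A 0 0 (Aᵀ)⁻¹` for some
`A ∈ GL(n,ℂ)`.  In particular `A ↦ fromBlocks A 0 0 (Aᵀ)⁻¹` is an injective,
multiplicative map of `GL(n,ℂ)` onto the fixed-point subgroup `Sp(2n,ℂ)^{Int_S}`, so the
latter is isomorphic to `GL(n,ℂ)`. -/
theorem stmt_16 {n : ℕ} (hn : 1 ≤ n) :
    let S : Matrix (Fin n ⊕ Fin n) (Fin n ⊕ Fin n) ℂ :=
      Matrix.fromBlocks (Complex.I • 1) 0 0 ((-Complex.I) • 1)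
    (∀ M ∈ Matrix.symplecticGroup (Fin n) ℂ,
      (S * M = M * S ↔
        ∃ A : (Matrix (Fin n) (Fin n) ℂ)ˣ,
          M = Matrix.fromBlocks (A : Matrix (Fin n) (Fin n) ℂ) 0 0
            (((A : Matrix (Fin n) (Fin n) ℂ)ᵀ)⁻¹))) ∧
    (∀ A : (Matrix (Fin n) (Fin n) ℂ)ˣ,
      Matrix.fromBlocks (A : Matrix (Fin n) (Fin n) ℂ) 0 0
          (((A : Matrix (Fin n) (Fin n) ℂ)ᵀ)⁻¹) ∈ Matrix.symplecticGroup (Fin n) ℂ ∧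
        S * Matrix.fromBlocks (A : Matrix (Fin n) (Fin n) ℂ) 0 0
            (((A : Matrix (Fin n) (Fin n) ℂ)ᵀ)⁻¹) =
          Matrix.fromBlocks (A : Matrix (Fin n) (Fin n) ℂ) 0 0
            (((A : Matrix (Fin n) (Fin n) ℂ)ᵀ)⁻¹) * S) ∧
    Function.Injective (fun A : (Matrix (Fin n) (Fin n) ℂ)ˣ =>
      Matrix.fromBlocks (A : Matrix (Fin n) (Fin n) ℂ) 0 0
        (((A : Matrix (Fin n) (Fin n) ℂ)ᵀ)⁻¹)) ∧
    (∀ A B : (Matrix (Fin n) (Fin n) ℂ)ˣ,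
      Matrix.fromBlocks ((A * B : (Matrix (Fin n) (Fin n) ℂ)ˣ) : Matrix (Fin n) (Fin n) ℂ)
          0 0 ((((A * B : (Matrix (Fin n) (Fin n) ℂ)ˣ) : Matrix (Fin n) (Fin n) ℂ)ᵀ)⁻¹) =
        Matrix.fromBlocks (A : Matrix (Fin n) (Fin n) ℂ) 0 0
            (((A : Matrix (Fin n) (Fin n) ℂ)ᵀ)⁻¹) *
          Matrix.fromBlocks (B : Matrix (Fin n) (Fin n) ℂ) 0 0
            (((B : Matrix (Fin n) (Fin n) ℂ)ᵀ)⁻¹)) := by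
  intro S
  -- basic fact: transpose inverse
  have hTinv : ∀ A : (Matrix (Fin n) (Fin n) ℂ)ˣ,
      ((A : Matrix (Fin n) (Fin n) ℂ)ᵀ)⁻¹ = ((A⁻¹ : (Matrix (Fin n) (Fin n) ℂ)ˣ) : _)ᵀ := by
    intro A
    exact Matrix.inv_eq_right_inv (by
      rw [← Matrix.transpose_mul, ← Units.val_mul, inv_mul_cancel, Units.val_one,
        Matrix.transpose_one])
  have key2 : ∀ A : (Matrix (Fin n) (Fin n) ℂ)ˣ,
      Matrix.fromBlocks (A : Matrix (Fin n) (Fin n) ℂ) 0 0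
          (((A : Matrix (Fin n) (Fin n) ℂ)ᵀ)⁻¹) ∈ Matrix.symplecticGroup (Fin n) ℂ ∧
        S * Matrix.fromBlocks (A : Matrix (Fin n) (Fin n) ℂ) 0 0
            (((A : Matrix (Fin n) (Fin n) ℂ)ᵀ)⁻¹) =
          Matrix.fromBlocks (A : Matrix (Fin n) (Fin n) ℂ) 0 0
            (((A : Matrix (Fin n) (Fin n) ℂ)ᵀ)⁻¹) * S := by
    intro A
    constructor
    · rw [SymplecticGroup.mem_iff, Matrix.J, hTinv A]
      simp only [Matrix.fromBlocks_multiply, Matrix.fromBlocks_transpose,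
        Matrix.transpose_transpose, Matrix.mul_zero, Matrix.zero_mul, Matrix.mul_one,
        Matrix.transpose_zero, add_zero, zero_add, Matrix.mul_neg, Matrix.neg_mul]
      rw [← Units.val_mul, mul_inv_cancel, ← Matrix.transpose_mul, ← Units.val_mul,
        mul_inv_cancel]
      simp
    · show Matrix.fromBlocks (Complex.I • 1) 0 0 ((-Complex.I) • 1) * _ =
        _ * Matrix.fromBlocks (Complex.I • 1) 0 0 ((-Complex.I) • 1)
      simp only [Matrix.fromBlocks_multiply, Matrix.mul_zero, Matrix.zero_mul,
        Matrix.smul_mul, Matrix.mul_smul, Matrix.one_mul, Matrix.mul_one,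
        add_zero, zero_add, smul_zero]
  refine ⟨?_, key2, ?_, ?_⟩
  · intro M hM
    constructor
    · intro hcomm
      -- decompose M into blocks
      set A := M.toBlocks₁₁ with hA
      set B := M.toBlocks₁₂ with hB
      set C := M.toBlocks₂₁ with hC
      set D := M.toBlocks₂₂ with hD
      have hMeq : M = Matrix.fromBlocks A B C D := (Matrix.fromBlocks_toBlocks M).symm
      rw [hMeq] at hcomm
      have hS : S = Matrix.fromBlocks (Complex.I • 1) 0 0 ((-Complex.I) • 1) := rfl
      rw [hS] at hcomm
      simp only [Matrix.fromBlocks_multiply, Matrix.mul_zero, Matrix.zero_mul,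
        Matrix.smul_mul, Matrix.mul_smul, Matrix.one_mul, Matrix.mul_one,
        add_zero, zero_add, smul_zero, neg_smul] at hcomm
      have h12 := congrArg Matrix.toBlocks₁₂ hcomm
      have h21 := congrArg Matrix.toBlocks₂₁ hcomm
      simp only [Matrix.toBlocks_fromBlocks₁₂, Matrix.toBlocks_fromBlocks₂₁,
        Matrix.mul_neg, Matrix.neg_mul, Matrix.mul_smul, Matrix.smul_mul,
        Matrix.mul_one, Matrix.one_mul] at h12 h21
      -- h12 : I • B = -(I • B),  h21 : -(I • C) = I • C
      have hB0 : B = 0 := by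
        have h0 : ((2 : ℂ) * Complex.I) • B = 0 := by
          rw [← smul_smul, two_smul]
          nth_rewrite 2 [h12]
          simp
        exact (smul_eq_zero.mp h0).resolve_left (by simp [Complex.I_ne_zero])
      have hC0 : C = 0 := by
        have h0 : ((2 : ℂ) * Complex.I) • C = 0 := by
          rw [← smul_smul, two_smul]
          nth_rewrite 1 [← h21]
          simp
        exact (smul_eq_zero.mp h0).resolve_left (by simp [Complex.I_ne_zero])
      rw [hB0, hC0] at hMeq
      -- use the symplectic condition
      rw [SymplecticGroup.mem_iff, hMeq, Matrix.J] at hM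
      simp only [Matrix.fromBlocks_multiply, Matrix.fromBlocks_transpose,
        Matrix.mul_zero, Matrix.zero_mul, Matrix.mul_one, Matrix.mul_neg,
        Matrix.neg_mul, Matrix.transpose_zero, add_zero, zero_add, neg_zero] at hM
      have hADt : -(A * Dᵀ) = -1 := congrArg Matrix.toBlocks₁₂ hM
      have hADt' : A * Dᵀ = 1 := by
        have := congrArg Neg.neg hADt; simpa using this
      have hDtA : Dᵀ * A = 1 := mul_eq_one_comm.mp hADt'
      refine ⟨⟨A, Dᵀ, hADt', hDtA⟩, ?_⟩
      rw [hMeq]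
      congr 1
      rw [Matrix.inv_eq_right_inv]
      show Aᵀ * Dᵀᵀ = 1
      rw [← Matrix.transpose_mul, hDtA, Matrix.transpose_one]
    · rintro ⟨A, rfl⟩
      exact (key2 A).2
  · intro A B h
    ext i j
    have := congrArg Matrix.toBlocks₁₁ h
    simp only [Matrix.toBlocks_fromBlocks₁₁] at this
    exact congrFun (congrFun this i) j
  · intro A B
    rw [Matrix.fromBlocks_multiply]
    simp only [Matrix.mul_zero, Matrix.zero_mul, add_zero, zero_add]
    congr 1
    rw [hTinv A, hTinv B, hTinv (A * B), ← Matrix.transpose_mul, ← Units.val_mul,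
      _root_.mul_inv_rev, Units.val_mul]
end

section
/- Let n ≥ 1, let Sp(2n,ℂ) be the symplectic group {P : P·J·Pᵀ = J} with J = fromBlocks 0 Iₙ (−Iₙ) 0, and let S := fromBlocks (i·Iₙ) 0 0 (−i·Iₙ). Then for every M ∈ Sp(2n,ℂ): S·M·S⁻¹ = −M if and only if there exists N ∈ Sp(2n,ℂ) commuting with S such that M = N·J; equivalently, if and only if there exists A ∈ GL(n,ℂ) with M = fromBlocks 0 A (−(Aᵀ)⁻¹) 0. In particular, the subgroup {M ∈ Sp(2n,ℂ) : S·M·S⁻¹·M⁻¹ ∈ {±1}} is generated by the centralizer of S in Sp(2n,ℂ) together with J. -/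
open Matrix

namespace Stmt17Aux

variable {n : ℕ}

noncomputable def Sm (n : ℕ) : Matrix (Fin n ⊕ Fin n) (Fin n ⊕ Fin n) ℂ :=
  fromBlocks (Complex.I • 1) 0 0 ((-Complex.I) • 1)

def Jm (n : ℕ) : Matrix (Fin n ⊕ Fin n) (Fin n ⊕ Fin n) ℂ :=
  fromBlocks 0 1 (-1) 0

lemma Sm_mul :
    Sm n * fromBlocks ((-Complex.I) • 1) 0 0 (Complex.I • 1) = 1 := by
  rw [Sm, fromBlocks_multiply]
  simp [Matrix.smul_mul, Matrix.mul_smul, smul_smul, Complex.I_mul_I, fromBlocks_one]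

lemma isUnit_Sm_det : IsUnit (Sm n).det :=
  Matrix.isUnit_det_of_right_inverse Sm_mul

lemma Sm_inv : (Sm n)⁻¹ = fromBlocks ((-Complex.I) • 1) 0 0 (Complex.I • 1) :=
  Matrix.inv_eq_right_inv Sm_mul

lemma conj (A B C D : Matrix (Fin n) (Fin n) ℂ) :
    Sm n * fromBlocks A B C D * (Sm n)⁻¹ = fromBlocks A (-B) (-C) D := by
  rw [Sm_inv, Sm, fromBlocks_multiply, fromBlocks_multiply]
  simp [Matrix.smul_mul, Matrix.mul_smul, smul_smul, Complex.I_mul_I]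

lemma Jm_mem : Jm n ∈ Matrix.symplecticGroup (Fin n) ℂ := by
  have h : Jm n = -(Matrix.J (Fin n) ℂ) := by
    rw [Matrix.J, Matrix.fromBlocks_neg]
    simp [Jm]
  rw [h]
  exact SymplecticGroup.neg_mem (SymplecticGroup.J_mem _ _)

/-- From anticommutation, the diagonal blocks vanish. -/
lemma anti_blocks {M : Matrix (Fin n ⊕ Fin n) (Fin n ⊕ Fin n) ℂ}
    (h : Sm n * M * (Sm n)⁻¹ = -M) :
    M = fromBlocks 0 M.toBlocks₁₂ M.toBlocks₂₁ 0 := by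
  rw [← fromBlocks_toBlocks M, conj, Matrix.fromBlocks_neg, fromBlocks_inj] at h
  obtain ⟨hA, -, -, hD⟩ := h
  have hA0 : M.toBlocks₁₁ = 0 := by
    have h2 : (2 : ℂ) • M.toBlocks₁₁ = 0 := by
      rw [two_smul]; nth_rewrite 2 [hA]; simp
    simpa using (smul_eq_zero.mp h2).resolve_left two_ne_zero
  have hD0 : M.toBlocks₂₂ = 0 := by
    have h2 : (2 : ℂ) • M.toBlocks₂₂ = 0 := by
      rw [two_smul]; nth_rewrite 2 [hD]; simp
    simpa using (smul_eq_zero.mp h2).resolve_left two_ne_zero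
  conv_lhs => rw [← fromBlocks_toBlocks M]
  rw [hA0, hD0]

/-- The A-form characterization, forward direction. -/
lemma anti_to_A {M : Matrix (Fin n ⊕ Fin n) (Fin n ⊕ Fin n) ℂ}
    (hM : M ∈ Matrix.symplecticGroup (Fin n) ℂ)
    (h : Sm n * M * (Sm n)⁻¹ = -M) :
    ∃ A : (Matrix (Fin n) (Fin n) ℂ)ˣ,
      M = fromBlocks 0 (A : Matrix (Fin n) (Fin n) ℂ)
        (-(((A : Matrix (Fin n) (Fin n) ℂ)ᵀ)⁻¹)) 0 := by
  set B := M.toBlocks₁₂ with hB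
  set C := M.toBlocks₂₁ with hC
  have hM0 : M = fromBlocks 0 B C 0 := anti_blocks h
  rw [SymplecticGroup.mem_iff, hM0, Matrix.J, fromBlocks_transpose, fromBlocks_multiply,
    fromBlocks_multiply] at hM
  simp only [Matrix.zero_mul, Matrix.mul_zero, Matrix.mul_one, Matrix.mul_neg, add_zero,
    zero_add, Matrix.transpose_zero] at hM
  rw [fromBlocks_inj] at hM
  obtain ⟨-, h1, h2, -⟩ := hM
  -- h1 : B * Cᵀ = -1 (roughly), h2 : C * Bᵀ = 1 (roughly); inspect
  have hBC : B * (-Cᵀ) = 1 := by rw [Matrix.mul_neg, h1, neg_neg]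
  have hCB : (-Cᵀ) * B = 1 := mul_eq_one_comm.mp hBC
  refine ⟨⟨B, -Cᵀ, hBC, hCB⟩, ?_⟩
  rw [hM0, fromBlocks_inj]
  refine ⟨rfl, rfl, ?_, rfl⟩
  rw [← Matrix.transpose_nonsing_inv, Matrix.inv_eq_right_inv hBC, Matrix.transpose_neg,
    Matrix.transpose_transpose, neg_neg]

end Stmt17Aux

namespace Stmt17Aux

variable {n : ℕ}

/-- Backward direction: the A-form anticommutes. -/
lemma A_to_anti (A : (Matrix (Fin n) (Fin n) ℂ)ˣ) :
    Sm n * fromBlocks 0 (A : Matrix (Fin n) (Fin n) ℂ)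
        (-(((A : Matrix (Fin n) (Fin n) ℂ)ᵀ)⁻¹)) 0 * (Sm n)⁻¹ =
      -fromBlocks 0 (A : Matrix (Fin n) (Fin n) ℂ)
        (-(((A : Matrix (Fin n) (Fin n) ℂ)ᵀ)⁻¹)) 0 := by
  rw [conj, Matrix.fromBlocks_neg]
  simp

lemma unit_det (A : (Matrix (Fin n) (Fin n) ℂ)ˣ) :
    IsUnit (A : Matrix (Fin n) (Fin n) ℂ).det :=
  Matrix.isUnit_det_of_right_inverse A.mul_inv

/-- The block-diagonal companion matrix. -/
lemma N_mem (A : (Matrix (Fin n) (Fin n) ℂ)ˣ) :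
    fromBlocks (A : Matrix (Fin n) (Fin n) ℂ) 0 0 (((A : Matrix (Fin n) (Fin n) ℂ)ᵀ)⁻¹) ∈
      Matrix.symplecticGroup (Fin n) ℂ := by
  have hdet := unit_det A
  have hdetT : IsUnit ((A : Matrix (Fin n) (Fin n) ℂ)ᵀ).det := by
    rwa [Matrix.det_transpose]
  rw [SymplecticGroup.mem_iff, Matrix.J, fromBlocks_transpose, fromBlocks_multiply,
    fromBlocks_multiply]
  rw [fromBlocks_inj]
  refine ⟨by simp, ?_, ?_, by simp⟩
  · simp only [Matrix.mul_zero, Matrix.zero_mul, Matrix.mul_one, Matrix.mul_neg, add_zero,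
      zero_add, Matrix.transpose_zero, Matrix.neg_mul]
    rw [← Matrix.transpose_nonsing_inv, Matrix.transpose_transpose,
      Matrix.mul_nonsing_inv _ hdet]
  · simp only [Matrix.mul_zero, Matrix.zero_mul, Matrix.mul_one, Matrix.mul_neg, add_zero,
      zero_add, Matrix.transpose_zero, Matrix.neg_mul]
    rw [Matrix.nonsing_inv_mul _ hdetT]

lemma N_comm (A E : Matrix (Fin n) (Fin n) ℂ) :
    Sm n * fromBlocks A 0 0 E = fromBlocks A 0 0 E * Sm n := by
  rw [Sm, fromBlocks_multiply, fromBlocks_multiply]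
  simp [Matrix.smul_mul, Matrix.mul_smul]

lemma N_mul_Jm (A E : Matrix (Fin n) (Fin n) ℂ) :
    fromBlocks A 0 0 E * Jm n = fromBlocks 0 A (-E) 0 := by
  rw [Jm, fromBlocks_multiply]
  simp

lemma Sm_Jm_anti : Sm n * Jm n * (Sm n)⁻¹ = -Jm n := by
  rw [Jm, conj, Matrix.fromBlocks_neg]
  simp

/-- anti → N decomposition -/
lemma anti_to_N {M : Matrix (Fin n ⊕ Fin n) (Fin n ⊕ Fin n) ℂ}
    (hM : M ∈ Matrix.symplecticGroup (Fin n) ℂ)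
    (h : Sm n * M * (Sm n)⁻¹ = -M) :
    ∃ N ∈ Matrix.symplecticGroup (Fin n) ℂ, Sm n * N = N * Sm n ∧ M = N * Jm n := by
  obtain ⟨A, rfl⟩ := anti_to_A hM h
  exact ⟨_, N_mem A, N_comm _ _, (N_mul_Jm _ _).symm⟩

/-- N decomposition → anti -/
lemma N_to_anti {N : Matrix (Fin n ⊕ Fin n) (Fin n ⊕ Fin n) ℂ}
    (hcomm : Sm n * N = N * Sm n) :
    Sm n * (N * Jm n) * (Sm n)⁻¹ = -(N * Jm n) := by
  rw [← Matrix.mul_assoc, hcomm, Matrix.mul_assoc N, Matrix.mul_assoc N, Sm_Jm_anti,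
    Matrix.mul_neg]

end Stmt17Aux

namespace Stmt17Aux

variable {n : ℕ}

/-- The ±1-commutation condition, in product-free form. -/
lemma cond_iff (M : Matrix (Fin n ⊕ Fin n) (Fin n ⊕ Fin n) ℂ) (hM : IsUnit M.det) (ε : ℂ) :
    Sm n * M * (Sm n)⁻¹ * M⁻¹ = ε • 1 ↔ Sm n * M = ε • (M * Sm n) := by
  have hS := isUnit_Sm_det (n := n)
  constructor
  · intro h
    have key : Sm n * M * (Sm n)⁻¹ * M⁻¹ * (M * Sm n) = Sm n * M := by
      rw [Matrix.mul_assoc (Sm n * M * (Sm n)⁻¹), Matrix.nonsing_inv_mul_cancel_left _ _ hM,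
        Matrix.nonsing_inv_mul_cancel_right _ _ hS]
    rw [← key, h, Matrix.smul_mul, Matrix.one_mul]
  · intro h
    rw [h, Matrix.smul_mul, Matrix.smul_mul, Matrix.mul_nonsing_inv_cancel_right _ _ hS,
      Matrix.mul_nonsing_inv _ hM]

lemma Q_mul {M M' : Matrix (Fin n ⊕ Fin n) (Fin n ⊕ Fin n) ℂ} {ε ε' : ℂ}
    (h : Sm n * M = ε • (M * Sm n)) (h' : Sm n * M' = ε' • (M' * Sm n)) :
    Sm n * (M * M') = (ε * ε') • (M * M' * Sm n) := by
  rw [← Matrix.mul_assoc, h, Matrix.smul_mul, Matrix.mul_assoc, h', Matrix.mul_smul,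
    smul_smul, Matrix.mul_assoc]

lemma Q_inv {M : Matrix (Fin n ⊕ Fin n) (Fin n ⊕ Fin n) ℂ} {ε : ℂ} (hM : IsUnit M.det)
    (hε : ε * ε = 1) (h : Sm n * M = ε • (M * Sm n)) :
    Sm n * M⁻¹ = ε • (M⁻¹ * Sm n) := by
  have e1 : M⁻¹ * (Sm n * M) * M⁻¹ = M⁻¹ * Sm n := by
    rw [← Matrix.mul_assoc M⁻¹ (Sm n) M, Matrix.mul_nonsing_inv_cancel_right _ _ hM]
  have e2 : M⁻¹ * (ε • (M * Sm n)) * M⁻¹ = ε • (Sm n * M⁻¹) := by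
    rw [Matrix.mul_smul, Matrix.smul_mul, ← Matrix.mul_assoc M⁻¹ M (Sm n),
      Matrix.nonsing_inv_mul _ hM, Matrix.one_mul]
  have h1 : M⁻¹ * Sm n = ε • (Sm n * M⁻¹) := by rw [← e1, h, e2]
  have h2 : ε • (M⁻¹ * Sm n) = Sm n * M⁻¹ := by
    rw [h1, smul_smul, hε, one_smul]
  exact h2.symm

lemma Q_Jm : Sm n * Jm n = (-1 : ℂ) • (Jm n * Sm n) := by
  rw [Sm, Jm, fromBlocks_multiply, fromBlocks_multiply, fromBlocks_smul]
  simp [Matrix.smul_mul, Matrix.mul_smul, smul_smul]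

lemma eps_mul {ε ε' : ℂ} (h : ε = 1 ∨ ε = -1) (h' : ε' = 1 ∨ ε' = -1) :
    ε * ε' = 1 ∨ ε * ε' = -1 := by
  rcases h with rfl | rfl <;> rcases h' with rfl | rfl <;> norm_num

lemma eps_sq {ε : ℂ} (h : ε = 1 ∨ ε = -1) : ε * ε = 1 := by
  rcases h with rfl | rfl <;> norm_num

end Stmt17Aux

namespace Stmt17Aux

/-- The subgroup of `Sp(2n,ℂ)` of elements conjugated by `S` to `±1` times themselves. -/
noncomputable def Hsub (n : ℕ) : Subgroup (Matrix.symplecticGroup (Fin n) ℂ) where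
  carrier := {M : Matrix.symplecticGroup (Fin n) ℂ | ∃ ε : ℂ, (ε = 1 ∨ ε = -1) ∧
    Sm n * (M : Matrix (Fin n ⊕ Fin n) (Fin n ⊕ Fin n) ℂ) * (Sm n)⁻¹ *
      ((M : Matrix (Fin n ⊕ Fin n) (Fin n ⊕ Fin n) ℂ))⁻¹ = ε • 1}
  one_mem' := ⟨1, Or.inl rfl, by
    simp [Matrix.mul_nonsing_inv (Sm n) isUnit_Sm_det]⟩
  mul_mem' := by
    rintro a b ⟨ε, hε1, hε⟩ ⟨ε', hε'1, hε'⟩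
    have hda : IsUnit ((a : Matrix (Fin n ⊕ Fin n) (Fin n ⊕ Fin n) ℂ)).det :=
      SymplecticGroup.symplectic_det a.2
    have hdb : IsUnit ((b : Matrix (Fin n ⊕ Fin n) (Fin n ⊕ Fin n) ℂ)).det :=
      SymplecticGroup.symplectic_det b.2
    have hdab : IsUnit ((a : Matrix (Fin n ⊕ Fin n) (Fin n ⊕ Fin n) ℂ) * (b : Matrix (Fin n ⊕ Fin n) (Fin n ⊕ Fin n) ℂ)).det := by
      rw [Matrix.det_mul]; exact hda.mul hdb
    exact ⟨ε * ε', eps_mul hε1 hε'1, (cond_iff _ hdab _).mpr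
      (Q_mul ((cond_iff _ hda _).mp hε) ((cond_iff _ hdb _).mp hε'))⟩
  inv_mem' := by
    rintro a ⟨ε, hε1, hε⟩
    have hda : IsUnit ((a : Matrix (Fin n ⊕ Fin n) (Fin n ⊕ Fin n) ℂ)).det :=
      SymplecticGroup.symplectic_det a.2
    refine ⟨ε, hε1, ?_⟩
    show Sm n * (((a⁻¹ : Matrix.symplecticGroup (Fin n) ℂ)) :
        Matrix (Fin n ⊕ Fin n) (Fin n ⊕ Fin n) ℂ) * (Sm n)⁻¹ *
      ((((a⁻¹ : Matrix.symplecticGroup (Fin n) ℂ)) :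
        Matrix (Fin n ⊕ Fin n) (Fin n ⊕ Fin n) ℂ))⁻¹ = ε • 1
    rw [SymplecticGroup.coe_inv']
    exact (cond_iff _ (Matrix.isUnit_nonsing_inv_det _ hda) _).mpr
      (Q_inv hda (eps_sq hε1) ((cond_iff _ hda _).mp hε))

end Stmt17Aux


open Stmt17Aux in
/-- Let `S = fromBlocks (i Iₙ) 0 0 (−i Iₙ)` and
`J' = fromBlocks 0 Iₙ (−Iₙ) 0`.  For `M ∈ Sp(2n,ℂ)` one has `S M S⁻¹ = −M` iff
`M = N J'` for some `N ∈ Sp(2n,ℂ)` commuting with `S`, iff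
`M = fromBlocks 0 A (−(Aᵀ)⁻¹) 0` for some `A ∈ GL(n,ℂ)`.  In particular the subgroup
`{M ∈ Sp(2n,ℂ) : S M S⁻¹ M⁻¹ ∈ {±1}}` is generated by the centralizer of `S` in
`Sp(2n,ℂ)` together with `J'`. -/
theorem stmt_17 {n : ℕ} (hn : 1 ≤ n) :
    let J' : Matrix (Fin n ⊕ Fin n) (Fin n ⊕ Fin n) ℂ := Matrix.fromBlocks 0 1 (-1) 0
    let S : Matrix (Fin n ⊕ Fin n) (Fin n ⊕ Fin n) ℂ :=
      Matrix.fromBlocks (Complex.I • 1) 0 0 ((-Complex.I) • 1)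
    (∀ M ∈ Matrix.symplecticGroup (Fin n) ℂ,
      (S * M * S⁻¹ = -M ↔
        ∃ N ∈ Matrix.symplecticGroup (Fin n) ℂ, S * N = N * S ∧ M = N * J') ∧
      (S * M * S⁻¹ = -M ↔
        ∃ A : (Matrix (Fin n) (Fin n) ℂ)ˣ,
          M = Matrix.fromBlocks 0 (A : Matrix (Fin n) (Fin n) ℂ)
            (-(((A : Matrix (Fin n) (Fin n) ℂ)ᵀ)⁻¹)) 0)) ∧
    ∃ hJ : J' ∈ Matrix.symplecticGroup (Fin n) ℂ,
      ∀ M : Matrix.symplecticGroup (Fin n) ℂ,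
        ((∃ ε : ℂ, (ε = 1 ∨ ε = -1) ∧
            S * (M : Matrix (Fin n ⊕ Fin n) (Fin n ⊕ Fin n) ℂ) * S⁻¹ *
              ((M : Matrix (Fin n ⊕ Fin n) (Fin n ⊕ Fin n) ℂ))⁻¹ = ε • 1) ↔
          M ∈ Subgroup.closure
            ({N : Matrix.symplecticGroup (Fin n) ℂ |
                S * (N : Matrix (Fin n ⊕ Fin n) (Fin n ⊕ Fin n) ℂ) =
                  (N : Matrix (Fin n ⊕ Fin n) (Fin n ⊕ Fin n) ℂ) * S} ∪ {⟨J', hJ⟩})) := by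
  intro J' S
  have hS : S = Sm n := rfl
  have hJ' : J' = Jm n := rfl
  rw [hS, hJ']
  constructor
  · intro M hM
    have hiffA : Sm n * M * (Sm n)⁻¹ = -M ↔
        ∃ A : (Matrix (Fin n) (Fin n) ℂ)ˣ,
          M = Matrix.fromBlocks 0 (A : Matrix (Fin n) (Fin n) ℂ)
            (-(((A : Matrix (Fin n) (Fin n) ℂ)ᵀ)⁻¹)) 0 := by
      constructor
      · exact anti_to_A hM
      · rintro ⟨A, rfl⟩; exact A_to_anti A
    refine ⟨⟨fun h => anti_to_N hM h, ?_⟩, hiffA⟩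
    rintro ⟨N, hN, hcomm, rfl⟩
    exact N_to_anti hcomm
  · refine ⟨Jm_mem, fun M => ?_⟩
    have hdet : IsUnit ((M : Matrix (Fin n ⊕ Fin n) (Fin n ⊕ Fin n) ℂ)).det :=
      SymplecticGroup.symplectic_det M.2
    constructor
    · rintro ⟨ε, hε1, hε⟩
      rcases hε1 with rfl | rfl
      · have hcomm : Sm n * (M : Matrix (Fin n ⊕ Fin n) (Fin n ⊕ Fin n) ℂ) = (M : Matrix (Fin n ⊕ Fin n) (Fin n ⊕ Fin n) ℂ) * Sm n := by
          have h := (cond_iff _ hdet 1).mp hε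
          rwa [one_smul] at h
        exact Subgroup.subset_closure (Or.inl hcomm)
      · have hQ := (cond_iff _ hdet (-1)).mp hε
        have hanti : Sm n * (M : Matrix (Fin n ⊕ Fin n) (Fin n ⊕ Fin n) ℂ) * (Sm n)⁻¹ =
            -(M : Matrix (Fin n ⊕ Fin n) (Fin n ⊕ Fin n) ℂ) := by
          rw [hQ, Matrix.smul_mul, Matrix.mul_nonsing_inv_cancel_right _ _ isUnit_Sm_det,
            neg_one_smul]
        obtain ⟨N, hN, hcomm, hMeq⟩ := anti_to_N M.2 hanti
        have hM2 : M = (⟨N, hN⟩ : Matrix.symplecticGroup (Fin n) ℂ) * ⟨Jm n, Jm_mem⟩ :=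
          Subtype.ext hMeq
        rw [hM2]
        exact mul_mem (Subgroup.subset_closure (Or.inl hcomm))
          (Subgroup.subset_closure (Or.inr rfl))
    · intro hMcl
      have hsub : ({N : Matrix.symplecticGroup (Fin n) ℂ |
          Sm n * (N : Matrix (Fin n ⊕ Fin n) (Fin n ⊕ Fin n) ℂ) =
            (N : Matrix (Fin n ⊕ Fin n) (Fin n ⊕ Fin n) ℂ) * Sm n} ∪ {⟨Jm n, Jm_mem⟩}) ⊆
          ((Hsub n) : Set (Matrix.symplecticGroup (Fin n) ℂ)) := by
        rintro X (hX | hX)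
        · have hdX : IsUnit ((X : Matrix (Fin n ⊕ Fin n) (Fin n ⊕ Fin n) ℂ)).det :=
            SymplecticGroup.symplectic_det X.2
          exact ⟨1, Or.inl rfl, (cond_iff _ hdX 1).mpr (by rw [one_smul]; exact hX)⟩
        · rw [Set.mem_singleton_iff] at hX
          subst hX
          exact ⟨-1, Or.inr rfl,
            (cond_iff _ (SymplecticGroup.symplectic_det Jm_mem) _).mpr Q_Jm⟩
      exact (Subgroup.closure_le (Hsub n)).mpr hsub hMcl
end
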